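/- arXiv:2405.07427 — 7 statements merged into one kernel-verified Lean document; each statement's English description precedes it below -/
import Mathlib

section
/- Let γ ∈ (1,2) and let j be a natural number. Then (1/(2π)) ∫₀^{2π} cos(jη) · (sin(η/2))^{2−γ} dη = (−1)^j · Γ(3−γ) / (2^{2−γ} · Γ(2 + j − γ/2) · Γ(2 − j − γ/2)). -/
open Real MeasureTheory Set intervalIntegral

private lemma aux_mul_rpow {x s : ℝ} (hx : 0 ≤ x) (hs : s ≠ 0) :
    x * x ^ (s - 1) = x ^ s := by
  rcases hx.eq_or_lt with h | h
  · rw [← h, Real.zero_rpow hs, zero_mul]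
  · have := Real.rpow_add h 1 (s - 1)
    rw [Real.rpow_one, show (1 : ℝ) + (s - 1) = s by ring] at this
    exact this.symm

private lemma rec_step (s : ℝ) (hs0 : 0 < s) (j : ℕ) :
    (s + 2*j + 2) * ∫ θ in (0:ℝ)..π, Real.cos (2*(j+1)*θ) * Real.sin θ ^ s
      = (2*j - s) * ∫ θ in (0:ℝ)..π, Real.cos (2*j*θ) * Real.sin θ ^ s := by
  have hsin_cont : Continuous fun θ : ℝ => Real.sin θ ^ s :=
    Real.continuous_sin.rpow_const (fun x => Or.inr hs0.le)
  have hint : ∀ c : ℝ, IntervalIntegrable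
      (fun θ => Real.cos (c*θ) * Real.sin θ ^ s) volume 0 π := by
    intro c
    exact ((Real.continuous_cos.comp (continuous_const.mul continuous_id)).mul
      hsin_cont).intervalIntegrable 0 π
  -- FTC part
  set F : ℝ → ℝ := fun θ => Real.cos ((2*j+1)*θ) * Real.sin θ ^ (s+1) with hF
  set F' : ℝ → ℝ := fun θ =>
    (-((2*j+1) * Real.sin ((2*j+1)*θ))) * Real.sin θ ^ (s+1)
      + Real.cos ((2*j+1)*θ) * ((s+1) * Real.sin θ ^ s * Real.cos θ) with hF'
  have hderiv : ∀ x ∈ uIcc (0:ℝ) π, HasDerivAt F (F' x) x := by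
    intro x _
    have h1 : HasDerivAt (fun θ : ℝ => Real.cos ((2*j+1)*θ))
        (-((2*j+1) * Real.sin ((2*j+1)*x))) x := by
      have := (Real.hasDerivAt_cos ((2*j+1)*x)).comp x
        ((hasDerivAt_id x).const_mul (2*(j:ℝ)+1))
      exact this.congr_deriv (by ring)
    have h2 : HasDerivAt (fun θ : ℝ => Real.sin θ ^ (s+1))
        ((s+1) * Real.sin x ^ s * Real.cos x) x := by
      have := (Real.hasDerivAt_rpow_const (p := s+1)
        (Or.inr (by linarith))).comp x (Real.hasDerivAt_sin x)
      exact this.congr_deriv (by rw [add_sub_cancel_right])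
    exact h1.mul h2
  have hF'int : IntervalIntegrable F' volume 0 π := by
    apply Continuous.intervalIntegrable
    have c1 : Continuous fun θ : ℝ => Real.sin θ ^ (s+1) :=
      Real.continuous_sin.rpow_const (fun x => Or.inr (by linarith))
    fun_prop
  have hFTC := intervalIntegral.integral_eq_sub_of_hasDerivAt hderiv hF'int
  have hF0 : F 0 = 0 := by
    simp [hF, Real.zero_rpow (by linarith : s + 1 ≠ 0)]
  have hFπ : F π = 0 := by
    simp [hF, Real.zero_rpow (by linarith : s + 1 ≠ 0)]
  rw [hF0, hFπ, sub_zero] at hFTC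
  -- rewrite the integrand of F' as a linear combination
  have heq : EqOn F' (fun θ =>
      (s+2*j+2)/2 * (Real.cos (2*(j+1)*θ) * Real.sin θ ^ s)
        + (s-2*j)/2 * (Real.cos (2*j*θ) * Real.sin θ ^ s)) (uIcc (0:ℝ) π) := by
    intro θ hθ
    rw [uIcc_of_le Real.pi_pos.le] at hθ
    have hsθ : 0 ≤ Real.sin θ := Real.sin_nonneg_of_nonneg_of_le_pi hθ.1 hθ.2
    have hpow : Real.sin θ ^ (s+1) = Real.sin θ * Real.sin θ ^ s := by
      have h := aux_mul_rpow hsθ (show s + 1 ≠ 0 by linarith)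
      rw [add_sub_cancel_right] at h
      exact h.symm
    simp only [hF']
    rw [hpow, show 2*((j:ℝ)+1)*θ = (2*j+1)*θ + θ by ring,
      show 2*(j:ℝ)*θ = (2*j+1)*θ - θ by ring, Real.cos_add, Real.cos_sub]
    ring
  rw [intervalIntegral.integral_congr heq] at hFTC
  rw [intervalIntegral.integral_add ((hint _).const_mul _) ((hint _).const_mul _),
    intervalIntegral.integral_const_mul, intervalIntegral.integral_const_mul] at hFTC
  have h2j : (2*((j:ℕ):ℝ)+2) = 2*(((j+1):ℕ):ℝ) := by push_cast; ring
  push_cast at hFTC ⊢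
  linarith

private lemma integral_sin_rpow_eq (s : ℝ) (hs0 : 0 < s) (hs1 : s < 1) :
    ∫ θ in (0:ℝ)..π, Real.sin θ ^ s
      = (2:ℝ) ^ s * (Real.Gamma ((s+1)/2)) ^ 2 / Real.Gamma (s+1) := by
  have hp0 : (s - 1)/2 ≠ 0 := by
    intro h; rw [div_eq_zero_iff] at h; rcases h with h | h <;> linarith
  set p : ℝ := (s-1)/2 with hpdef
  set f : ℝ → ℝ := fun θ => Real.sin (θ/2) ^ 2 with hfdef
  set f' : ℝ → ℝ := fun θ => Real.sin (θ/2) * Real.cos (θ/2) with hf'def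
  set g : ℝ → ℝ := fun x => (x*(1-x)) ^ p with hgdef
  -- the key pointwise identity on [0, π]
  have hid : ∀ θ ∈ Icc (0:ℝ) π, Real.sin θ ^ s = 2 ^ s * (f' θ * g (f θ)) := by
    intro θ hθ
    have ht : 0 ≤ Real.sin (θ/2) :=
      Real.sin_nonneg_of_nonneg_of_le_pi (by linarith [hθ.1]) (by linarith [hθ.2, Real.pi_pos])
    have hc : 0 ≤ Real.cos (θ/2) := by
      apply Real.cos_nonneg_of_mem_Icc
      constructor
      · linarith [hθ.1, Real.pi_pos]
      · linarith [hθ.2]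
    have htc : 0 ≤ Real.sin (θ/2) * Real.cos (θ/2) := mul_nonneg ht hc
    have h1 : g (f θ) = (Real.sin (θ/2) * Real.cos (θ/2)) ^ (s - 1) := by
      have hsq : Real.sin (θ/2)^2 * (1 - Real.sin (θ/2)^2)
          = (Real.sin (θ/2) * Real.cos (θ/2))^2 := by
        have := Real.sin_sq_add_cos_sq (θ/2)
        nlinarith [this]
      simp only [hgdef, hfdef]
      rw [hsq, ← Real.rpow_natCast (Real.sin (θ/2) * Real.cos (θ/2)) 2,
        ← Real.rpow_mul htc]
      norm_num
      rw [show (2:ℝ) * p = s - 1 by rw [hpdef]; ring]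
    have h2 : f' θ * g (f θ) = (Real.sin (θ/2) * Real.cos (θ/2)) ^ s := by
      rw [h1]; exact aux_mul_rpow htc (by linarith)
    have h3 : Real.sin θ = 2 * (Real.sin (θ/2) * Real.cos (θ/2)) := by
      rw [show θ = 2 * (θ/2) by ring, Real.sin_two_mul]
      ring_nf
    rw [h2, h3, Real.mul_rpow (by norm_num) htc]
  -- beta-integral value of ∫₀¹ g
  set u : ℂ := (((s+1)/2 : ℝ) : ℂ) with hudef
  have hu : 0 < u.re := by
    rw [hudef, Complex.ofReal_re]; linarith
  have heqF : ∀ x ∈ Icc (0:ℝ) 1,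
      (x:ℂ)^(u-1) * (1-(x:ℂ))^(u-1) = ((g x : ℝ) : ℂ) := by
    intro x hx
    have hx1 : (0:ℝ) ≤ 1 - x := by linarith [hx.2]
    have hu1 : u - 1 = ((p : ℝ) : ℂ) := by
      rw [hudef, hpdef]; push_cast; ring
    rw [hu1, ← Complex.ofReal_cpow hx.1,
      show (1 - (x:ℂ)) = (((1-x : ℝ)):ℂ) by push_cast; ring,
      ← Complex.ofReal_cpow hx1, ← Complex.ofReal_mul, ← Real.mul_rpow hx.1 hx1]
  have hgint : IntegrableOn g (Icc (0:ℝ) 1) := by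
    have hci := Complex.betaIntegral_convergent hu hu
    have hFicc : IntegrableOn
        (fun x : ℝ => (x:ℂ)^(u-1) * (1-(x:ℂ))^(u-1)) (Icc (0:ℝ) 1) := by
      rwa [intervalIntegrable_iff_integrableOn_Icc_of_le zero_le_one] at hci
    refine IntegrableOn.congr_fun hFicc.re (fun x hx => ?_) measurableSet_Icc
    show RCLike.re _ = _
    rw [heqF x hx]
    simp
  have hbeta : ∫ x in (0:ℝ)..1, g x
      = (Real.Gamma ((s+1)/2))^2 / Real.Gamma (s+1) := by
    have hGa : Real.Gamma (s+1) ≠ 0 := (Real.Gamma_pos_of_pos (by linarith)).ne'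
    have hGG := Complex.Gamma_mul_Gamma_eq_betaIntegral hu hu
    have hbi : Complex.betaIntegral u u = ((∫ x in (0:ℝ)..1, g x : ℝ) : ℂ) := by
      rw [Complex.betaIntegral,
        intervalIntegral.integral_congr (g := fun x : ℝ => ((g x : ℝ) : ℂ))
          (by rw [uIcc_of_le zero_le_one]; exact heqF)]
      exact intervalIntegral.integral_ofReal
    rw [hbi, show u + u = (((s+1) : ℝ) : ℂ) by rw [hudef]; push_cast; ring,
      Complex.Gamma_ofReal, Complex.Gamma_ofReal, ← Complex.ofReal_mul,
      ← Complex.ofReal_mul] at hGG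
    have h := Complex.ofReal_inj.mp hGG
    rw [eq_div_iff hGa, sq]
    linarith
  have himg : ∀ θ ∈ Icc (0:ℝ) π, f θ ∈ Icc (0:ℝ) 1 := by
    intro θ _
    constructor
    · positivity
    · simpa [hfdef] using Real.sin_sq_le_one (θ/2)
  -- substitution
  have hsub : ∫ θ in (0:ℝ)..π, f' θ • (g ∘ f) θ = ∫ x in (0:ℝ)..1, g x := by
    have h := intervalIntegral.integral_comp_smul_deriv''' (a := 0) (b := π)
      (f := f) (f' := f') (g := g) ?_ ?_ ?_ ?_ ?_
    · rw [show f 0 = 0 by simp [hfdef], show f π = 1 by simp [hfdef]] at h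
      exact h
    · exact Continuous.continuousOn (by fun_prop)
    · intro x hx
      have h1 : HasDerivAt (fun θ : ℝ => θ/2) (1/2) x := (hasDerivAt_id x).div_const 2
      have h2 := (Real.hasDerivAt_sin (x/2)).comp x h1
      have h3 := h2.pow 2
      have h4 : HasDerivAt f (f' x) x := by
        exact h3.congr_deriv (by simp [hf'def] <;> ring)
      exact h4.hasDerivWithinAt
    · rintro y ⟨θ, hθ, rfl⟩
      rw [min_eq_left Real.pi_pos.le, max_eq_right Real.pi_pos.le] at hθ
      have ht : 0 < Real.sin (θ/2) :=
        Real.sin_pos_of_pos_of_lt_pi (by linarith [hθ.1]) (by linarith [hθ.2, Real.pi_pos])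
      have hc : 0 < Real.cos (θ/2) := by
        apply Real.cos_pos_of_mem_Ioo
        constructor
        · linarith [hθ.1, Real.pi_pos]
        · linarith [hθ.2]
      have hfθ : f θ * (1 - f θ) ≠ 0 := by
        have hpyth := Real.sin_sq_add_cos_sq (θ/2)
        have : f θ * (1 - f θ) = (Real.sin (θ/2))^2 * (Real.cos (θ/2))^2 := by
          simp only [hfdef]; nlinarith [hpyth]
        rw [this]; positivity
      have hcont : ContinuousAt (fun x : ℝ => x * (1-x)) (f θ) := by fun_prop
      exact ((hcont.rpow_const (Or.inl hfθ)).continuousWithinAt)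
    · apply hgint.mono_set
      rw [uIcc_of_le Real.pi_pos.le]
      rintro y ⟨θ, hθ, rfl⟩
      exact himg θ hθ
    · rw [uIcc_of_le Real.pi_pos.le]
      have h2s : (2:ℝ)^(-s) * 2^s = 1 := by
        rw [← Real.rpow_add two_pos]; norm_num
      apply IntegrableOn.congr_fun
        (f := fun θ : ℝ => (2:ℝ)^(-s) * Real.sin θ ^ s)
        (((continuous_const.mul
          (Real.continuous_sin.rpow_const (fun x => Or.inr hs0.le))).integrableOn_Icc))
        ?_ measurableSet_Icc
      intro θ hθ
      show 2^(-s) * Real.sin θ ^ s = f' θ • (g ∘ f) θ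
      rw [hid θ hθ, smul_eq_mul, ← mul_assoc, h2s, one_mul]
      rfl
  calc ∫ θ in (0:ℝ)..π, Real.sin θ ^ s
      = ∫ θ in (0:ℝ)..π, 2 ^ s * (f' θ • (g ∘ f) θ) := by
        apply intervalIntegral.integral_congr
        rw [uIcc_of_le Real.pi_pos.le]
        intro θ hθ
        simpa [smul_eq_mul] using hid θ hθ
    _ = 2 ^ s * ∫ θ in (0:ℝ)..π, f' θ • (g ∘ f) θ := intervalIntegral.integral_const_mul _ _
    _ = 2 ^ s * ∫ x in (0:ℝ)..1, g x := by rw [hsub]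
    _ = (2:ℝ) ^ s * (Real.Gamma ((s+1)/2)) ^ 2 / Real.Gamma (s+1) := by
        rw [hbeta]; ring

private lemma Gamma_arg_ne_zero (s : ℝ) (hs0 : 0 < s) (hs1 : s < 1) (j : ℕ) :
    Real.Gamma (1 + s/2 - j) ≠ 0 := by
  refine Real.Gamma_ne_zero fun m => ?_
  intro hc
  have h1 : 0 < s/2 := by linarith
  have h2 : s/2 < 1/2 := by linarith
  rcases le_or_gt j (m+1) with h | h
  · have : (j:ℝ) ≤ (m:ℝ) + 1 := by exact_mod_cast h
    linarith
  · have : (m:ℝ) + 2 ≤ (j:ℝ) := by exact_mod_cast h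
    linarith

private lemma key_lemma (s : ℝ) (hs0 : 0 < s) (hs1 : s < 1) (j : ℕ) :
    ∫ θ in (0:ℝ)..π, Real.cos (2*j*θ) * Real.sin θ ^ s
      = (-1:ℝ)^j * π * Real.Gamma (s+1) /
        (2 ^ s * Real.Gamma (1 + s/2 + j) * Real.Gamma (1 + s/2 - j)) := by
  have hΓ1 : Real.Gamma (s+1) ≠ 0 := (Real.Gamma_pos_of_pos (by linarith)).ne'
  have h2s : (0:ℝ) < 2^s := Real.rpow_pos_of_pos two_pos s
  induction j with
  | zero =>
    have hΓq : Real.Gamma (1+s/2) ≠ 0 := (Real.Gamma_pos_of_pos (by positivity)).ne'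
    simp only [Nat.cast_zero, mul_zero, zero_mul, Real.cos_zero, one_mul, pow_zero,
      add_zero, sub_zero]
    rw [integral_sin_rpow_eq s hs0 hs1]
    have hdup := Real.Gamma_mul_Gamma_add_half ((s+1)/2)
    rw [show (s+1)/2 + 1/2 = 1 + s/2 by ring, show 2*((s+1)/2) = s+1 by ring,
      show (1:ℝ) - (s+1) = -s by ring] at hdup
    have hsq : (Real.Gamma ((s+1)/2) * Real.Gamma (1+s/2))^2
        = (Real.Gamma (s+1) * (2:ℝ)^(-s) * Real.sqrt π)^2 := by rw [hdup]
    have h2ns : (2:ℝ)^s * (2:ℝ)^(-s) = 1 := by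
      rw [← Real.rpow_add two_pos]; norm_num
    have hπ : Real.sqrt π ^ 2 = π := Real.sq_sqrt Real.pi_pos.le
    rw [div_eq_div_iff hΓ1 (by positivity)]
    linear_combination ((2:ℝ)^s)^2 * hsq
      + Real.Gamma (s+1)^2 * (Real.sqrt π)^2 * ((2:ℝ)^s*(2:ℝ)^(-s) + 1) * h2ns
      + Real.Gamma (s+1)^2 * hπ
  | succ j ih =>
    have hrec := rec_step s hs0 j
    have hden : s + 2*(j:ℝ) + 2 ≠ 0 := by positivity
    have hΓp : Real.Gamma (1+s/2+(j:ℝ)) ≠ 0 :=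
      (Real.Gamma_pos_of_pos (by positivity)).ne'
    have hΓm' : Real.Gamma (1+s/2-((j:ℝ)+1)) ≠ 0 := by
      have := Gamma_arg_ne_zero s hs0 hs1 (j+1)
      push_cast at this
      exact this
    have hsj : s/2 - (j:ℝ) ≠ 0 := by
      rcases Nat.eq_zero_or_pos j with h | h
      · subst h; simp; intro hc; linarith
      · have : (1:ℝ) ≤ (j:ℝ) := by exact_mod_cast h
        intro hc; linarith
    have hGp : Real.Gamma (1 + s/2 + ((j:ℝ)+1))
        = (1+s/2+(j:ℝ)) * Real.Gamma (1+s/2+(j:ℝ)) := by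
      rw [show (1:ℝ)+s/2+((j:ℝ)+1) = (1+s/2+(j:ℝ))+1 by ring,
        Real.Gamma_add_one (by positivity)]
    have hGm : Real.Gamma (1 + s/2 - (j:ℝ))
        = (s/2 - (j:ℝ)) * Real.Gamma (1+s/2-((j:ℝ)+1)) := by
      rw [show (1:ℝ)+s/2-(j:ℝ) = (s/2-(j:ℝ))+1 by ring, Real.Gamma_add_one hsj]
      congr 1; ring
    have hCj1 : ∫ θ in (0:ℝ)..π, Real.cos (2*((j:ℝ)+1)*θ) * Real.sin θ ^ s
        = (2*(j:ℝ) - s)/(s+2*(j:ℝ)+2)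
            * ∫ θ in (0:ℝ)..π, Real.cos (2*(j:ℝ)*θ) * Real.sin θ ^ s := by
      rw [div_mul_eq_mul_div, eq_div_iff hden]
      linarith [hrec]
    have hne1 : (s + 2*(j:ℝ) + 2) * (2 ^ s * Real.Gamma (1+s/2+(j:ℝ))
        * ((s/2-(j:ℝ)) * Real.Gamma (1+s/2-((j:ℝ)+1)))) ≠ 0 :=
      mul_ne_zero hden (mul_ne_zero (mul_ne_zero h2s.ne' hΓp) (mul_ne_zero hsj hΓm'))
    have hne2 : 2 ^ s * ((1+s/2+(j:ℝ)) * Real.Gamma (1+s/2+(j:ℝ)))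
        * Real.Gamma (1+s/2-((j:ℝ)+1)) ≠ 0 :=
      mul_ne_zero (mul_ne_zero h2s.ne' (mul_ne_zero (by positivity) hΓp)) hΓm'
    push_cast
    rw [hCj1, ih, hGp, hGm, div_mul_div_comm, div_eq_div_iff hne1 hne2]
    ring

/-- For `γ ∈ (1,2)` and `j : ℕ`,
`(1/(2π)) ∫₀^{2π} cos(jη)·(sin(η/2))^{2−γ} dη
  = (−1)^j·Γ(3−γ)/(2^{2−γ}·Γ(2+j−γ/2)·Γ(2−j−γ/2))`. -/
theorem integral_cos_mul_sin_rpow (γ : ℝ) (h1 : 1 < γ) (h2 : γ < 2) (j : ℕ) :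
    (1 / (2 * Real.pi)) *
        ∫ η in (0 : ℝ)..(2 * Real.pi),
          Real.cos (j * η) * Real.sin (η / 2) ^ (2 - γ) =
      (-1 : ℝ) ^ j * Real.Gamma (3 - γ) /
        ((2 : ℝ) ^ (2 - γ) * Real.Gamma (2 + j - γ / 2) *
          Real.Gamma (2 - j - γ / 2)) := by
  have hs0 : 0 < 2 - γ := by linarith
  have hs1 : 2 - γ < 1 := by linarith
  have hkey := key_lemma (2-γ) hs0 hs1 j
  have htrans : (∫ η in (0:ℝ)..(2*π), Real.cos (j*η) * Real.sin (η/2) ^ (2-γ))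
      = 2 * ∫ θ in (0:ℝ)..π, Real.cos (2*j*θ) * Real.sin θ ^ (2-γ) := by
    have h := intervalIntegral.integral_comp_div (a := 0) (b := 2*π)
      (f := fun θ => Real.cos (2*j*θ) * Real.sin θ ^ (2-γ)) (two_ne_zero)
    rw [zero_div, show (2*π)/2 = π by ring, smul_eq_mul] at h
    rw [← h]
    apply intervalIntegral.integral_congr
    intro η _
    dsimp only
    rw [show 2*(j:ℝ)*(η/2) = (j:ℝ)*η by ring]
  rw [htrans, hkey, show (3:ℝ)-γ = (2-γ)+1 by ring,
    show (2:ℝ)+(j:ℝ)-γ/2 = 1+(2-γ)/2+(j:ℝ) by ring,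
    show (2:ℝ)-(j:ℝ)-γ/2 = 1+(2-γ)/2-(j:ℝ) by ring]
  have hΓ1 : Real.Gamma ((2-γ)+1) ≠ 0 := (Real.Gamma_pos_of_pos (by linarith)).ne'
  have h2s : (0:ℝ) < 2^(2-γ) := Real.rpow_pos_of_pos two_pos _
  have hΓp : Real.Gamma (1+(2-γ)/2+(j:ℝ)) ≠ 0 :=
    (Real.Gamma_pos_of_pos (by positivity)).ne'
  have hΓm : Real.Gamma (1+(2-γ)/2-(j:ℝ)) ≠ 0 := Gamma_arg_ne_zero (2-γ) hs0 hs1 j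
  field_simp [Real.pi_ne_zero]
end

section
/- Let γ ∈ (1,2), let j ≥ 1 be an integer and let β ∈ ℝ. Then (1/(2π)) ∫₀^{2π} sin(j(β−η)) · cos(η/2) · (sin(η/2))^{1−γ} dη = (2j/(2−γ)) · cos(jβ) · (1/(2π)) ∫₀^{2π} cos(jη) · (sin(η/2))^{2−γ} dη. -/
open Real MeasureTheory intervalIntegral Set
open scoped Interval

lemma sin_half_pos {η : ℝ} (h0 : 0 < η) (h2 : η < 2 * π) : 0 < Real.sin (η / 2) :=
  Real.sin_pos_of_pos_of_lt_pi (by linarith) (by linarith)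

lemma integrable_sin_half_rpow (γ : ℝ) (h1 : 1 < γ) (h2 : γ < 2) :
    IntervalIntegrable (fun η => Real.sin (η / 2) ^ (1 - γ)) volume 0 (2 * π) := by
  have hπ := Real.pi_pos
  have hexp : (-1 : ℝ) < 1 - γ := by linarith
  have hcont : ContinuousOn (fun η => Real.sin (η / 2) ^ (1 - γ)) (Ioo 0 (2 * π)) := by
    refine ContinuousOn.rpow_const ?_ fun x hx => Or.inl (sin_half_pos hx.1 hx.2).ne'
    exact (Real.continuous_sin.comp (continuous_id.div_const 2)).continuousOn
  have hg : IntervalIntegrable (fun η : ℝ => π ^ (γ - 1) * η ^ (1 - γ)) volume 0 π :=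
    (intervalIntegral.intervalIntegrable_rpow' hexp).const_mul _
  have key : ∀ η : ℝ, 0 < η → η ≤ π → Real.sin (η / 2) ^ (1 - γ) ≤ π ^ (γ - 1) * η ^ (1 - γ) := by
    intro η hη hηπ
    have hb : η / π ≤ Real.sin (η / 2) := by
      have := Real.mul_le_sin (x := η / 2) (by linarith) (by linarith)
      calc η / π = 2 / π * (η / 2) := by field_simp
        _ ≤ Real.sin (η / 2) := this
    have hpos : 0 < η / π := div_pos hη hπ
    have := Real.rpow_le_rpow_of_nonpos hpos hb (by linarith : (1 : ℝ) - γ ≤ 0)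
    calc Real.sin (η / 2) ^ (1 - γ) ≤ (η / π) ^ (1 - γ) := this
      _ = π ^ (γ - 1) * η ^ (1 - γ) := by
          rw [Real.div_rpow hη.le hπ.le, div_eq_inv_mul, ← Real.rpow_neg hπ.le]
          ring_nf
  have hmeas : ∀ s : Set ℝ, s ⊆ Ioo 0 (2 * π) → MeasurableSet s →
      AEStronglyMeasurable (fun η => Real.sin (η / 2) ^ (1 - γ)) (volume.restrict s) :=
    fun s hs hms => (hcont.mono hs).aestronglyMeasurable hms
  have part1 : IntervalIntegrable (fun η => Real.sin (η / 2) ^ (1 - γ)) volume 0 π := by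
    have hIoo : (Ioo (0:ℝ) π : Set ℝ) =ᵐ[volume] Ioc (0:ℝ) π := Ioo_ae_eq_Ioc
    have hm : AEStronglyMeasurable (fun η => Real.sin (η / 2) ^ (1 - γ))
        (volume.restrict (Ι (0:ℝ) π)) := by
      rw [Set.uIoc_of_le hπ.le, ← Measure.restrict_congr_set hIoo]
      exact hmeas _ (Ioo_subset_Ioo le_rfl (by linarith)) measurableSet_Ioo
    refine hg.mono_fun' hm ?_
    refine (ae_restrict_iff' measurableSet_uIoc).2 (ae_of_all _ fun η hη => ?_)
    rw [Set.uIoc_of_le hπ.le] at hη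
    obtain ⟨ha, hb⟩ := hη
    have hs : 0 ≤ Real.sin (η / 2) := (sin_half_pos ha (by linarith)).le
    show ‖Real.sin (η / 2) ^ (1 - γ)‖ ≤ π ^ (γ - 1) * η ^ (1 - γ)
    rw [Real.norm_eq_abs, abs_of_nonneg (Real.rpow_nonneg hs _)]
    exact key η ha hb
  have part2 : IntervalIntegrable (fun η => Real.sin (η / 2) ^ (1 - γ)) volume π (2 * π) := by
    have hg2 : IntervalIntegrable (fun η : ℝ => π ^ (γ - 1) * (2 * π - η) ^ (1 - γ))
        volume π (2 * π) := by
      have h := hg.comp_sub_left (2 * π)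
      rw [show 2 * π - 0 = 2 * π by ring, show 2 * π - π = π by ring] at h
      exact h.symm
    have hIoo : (Ioo π (2*π) : Set ℝ) =ᵐ[volume] Ioc π (2*π) := Ioo_ae_eq_Ioc
    have hm : AEStronglyMeasurable (fun η => Real.sin (η / 2) ^ (1 - γ))
        (volume.restrict (Ι π (2*π))) := by
      rw [Set.uIoc_of_le (by linarith : π ≤ 2*π), ← Measure.restrict_congr_set hIoo]
      exact hmeas _ (Ioo_subset_Ioo (by linarith) le_rfl) measurableSet_Ioo
    refine hg2.mono_fun' hm ?_
    refine (ae_restrict_iff' measurableSet_uIoc).2 (ae_of_all _ fun η hη => ?_)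
    rw [Set.uIoc_of_le (by linarith : π ≤ 2*π)] at hη
    obtain ⟨ha, hb⟩ := hη
    have hs : 0 ≤ Real.sin (η / 2) := by
      rcases eq_or_lt_of_le hb with h | h
      · rw [h, show 2 * π / 2 = π by ring, Real.sin_pi]
      · exact (sin_half_pos (by linarith) h).le
    show ‖Real.sin (η / 2) ^ (1 - γ)‖ ≤ π ^ (γ - 1) * (2 * π - η) ^ (1 - γ)
    rw [Real.norm_eq_abs, abs_of_nonneg (Real.rpow_nonneg hs _)]
    rcases eq_or_lt_of_le hb with h | h
    · subst h
      rw [show 2 * π / 2 = π by ring, Real.sin_pi,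
        Real.zero_rpow (by linarith : (1:ℝ) - γ ≠ 0), sub_self,
        Real.zero_rpow (by linarith : (1:ℝ) - γ ≠ 0), mul_zero]
    · have h0 : 0 < 2 * π - η := by linarith
      have heq : Real.sin (η / 2) = Real.sin ((2 * π - η) / 2) := by
        rw [show (2 * π - η) / 2 = π - η / 2 by ring, Real.sin_pi_sub]
      rw [heq]
      exact key _ h0 (by linarith)
  exact part1.trans part2

lemma integrable_mul_sin_half_rpow (γ : ℝ) (h1 : 1 < γ) (h2 : γ < 2) (b : ℝ → ℝ)
    (hb : Continuous b) (hbd : ∀ x, |b x| ≤ 1) :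
    IntervalIntegrable (fun η => b η * Real.sin (η / 2) ^ (1 - γ)) volume 0 (2 * π) := by
  have h0 := integrable_sin_half_rpow γ h1 h2
  refine h0.mono_fun (hb.aestronglyMeasurable.mul ?_) ?_
  · rw [show Ι (0:ℝ) (2*π) = Ioc 0 (2*π) from Set.uIoc_of_le (by positivity)]
    exact h0.aestronglyMeasurable
  · refine ae_of_all _ fun x => ?_
    show ‖b x * Real.sin (x / 2) ^ (1 - γ)‖ ≤ ‖Real.sin (x / 2) ^ (1 - γ)‖
    rw [norm_mul]
    exact mul_le_of_le_one_left (norm_nonneg _) (by simpa [Real.norm_eq_abs] using hbd x)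

lemma cos_part_zero (γ : ℝ) (j : ℕ) :
    ∫ η in (0:ℝ)..(2*π),
      Real.cos (j * η) * Real.cos (η / 2) * Real.sin (η / 2) ^ (1 - γ) = 0 := by
  set f := fun η : ℝ => Real.cos (j * η) * Real.cos (η / 2) * Real.sin (η / 2) ^ (1 - γ) with hf
  have h := intervalIntegral.integral_comp_sub_left (a := (0:ℝ)) (b := 2*π) f (2*π)
  rw [sub_self, sub_zero] at h
  have hneg : ∀ x : ℝ, f (2*π - x) = -f x := by
    intro x
    have e1 : Real.cos ((j:ℝ) * (2*π - x)) = Real.cos ((j:ℝ) * x) := by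
      rw [mul_sub]; exact Real.cos_nat_mul_two_pi_sub _ j
    have e2 : Real.cos ((2*π - x)/2) = -Real.cos (x/2) := by
      rw [show (2*π - x)/2 = π - x/2 by ring, Real.cos_pi_sub]
    have e3 : Real.sin ((2*π - x)/2) = Real.sin (x/2) := by
      rw [show (2*π - x)/2 = π - x/2 by ring, Real.sin_pi_sub]
    simp only [hf, e1, e2, e3]; ring
  have h2 : (∫ x in (0:ℝ)..(2*π), f (2*π - x)) = ∫ x in (0:ℝ)..(2*π), -f x :=
    intervalIntegral.integral_congr fun x _ => hneg x
  rw [h2, intervalIntegral.integral_neg] at h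
  linarith

lemma sin_part_ibp (γ : ℝ) (h1 : 1 < γ) (h2 : γ < 2) (j : ℕ) :
    ∫ η in (0:ℝ)..(2*π),
        Real.sin (j * η) * Real.cos (η / 2) * Real.sin (η / 2) ^ (1 - γ)
      = -(2 * j / (2 - γ)) *
        ∫ η in (0:ℝ)..(2*π), Real.cos (j * η) * Real.sin (η / 2) ^ (2 - γ) := by
  have hπ := Real.pi_pos
  have hγ : (2:ℝ) - γ ≠ 0 := by linarith
  set g1 := fun η : ℝ => Real.sin (j * η) * Real.cos (η / 2) * Real.sin (η / 2) ^ (1 - γ) with hg1d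
  set g2 := fun η : ℝ => Real.cos (j * η) * Real.sin (η / 2) ^ (2 - γ) with hg2d
  have hcont2 : Continuous fun η : ℝ => Real.sin (η / 2) ^ (2 - γ) :=
    (Real.continuous_sin.comp (continuous_id.div_const 2)).rpow_const
      fun x => Or.inr (by linarith)
  have hg1 : IntervalIntegrable g1 volume 0 (2*π) := by
    have := integrable_mul_sin_half_rpow γ h1 h2
      (fun η => Real.sin (j * η) * Real.cos (η / 2))
      (((Real.continuous_sin.comp (continuous_const.mul continuous_id))).mul
        (Real.continuous_cos.comp (continuous_id.div_const 2)))
      (fun x => by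
        rw [abs_mul]
        exact mul_le_one₀ (Real.abs_sin_le_one _) (abs_nonneg _) (Real.abs_cos_le_one _))
    simpa [hg1d, mul_assoc] using this
  have hg2 : IntervalIntegrable g2 volume 0 (2*π) :=
    ((Real.continuous_cos.comp (continuous_const.mul continuous_id)).mul
      hcont2).intervalIntegrable _ _
  set F := fun η : ℝ => 2 / (2 - γ) * (Real.sin (η / 2) ^ (2 - γ) * Real.sin (j * η)) with hFd
  have hFcont : Continuous F :=
    continuous_const.mul (hcont2.mul
      (Real.continuous_sin.comp (continuous_const.mul continuous_id)))
  have hderiv : ∀ x ∈ Ioo (0:ℝ) (2*π),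
      HasDerivWithinAt F (g1 x + (2 * j / (2 - γ)) * g2 x) (Ioi x) x := by
    intro x hx
    have hs : HasDerivAt (fun η : ℝ => Real.sin (η / 2)) (Real.cos (x / 2) * (1/2)) x := by
      have := (Real.hasDerivAt_sin (x / 2)).comp x ((hasDerivAt_id x).div_const 2)
      simpa [Function.comp_def] using this
    have hr : HasDerivAt (fun η : ℝ => Real.sin (η / 2) ^ (2 - γ))
        (Real.cos (x / 2) * (1/2) * (2 - γ) * Real.sin (x / 2) ^ (2 - γ - 1)) x :=
      hs.rpow_const (Or.inl (sin_half_pos hx.1 hx.2).ne')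
    have hsj : HasDerivAt (fun η : ℝ => Real.sin ((j:ℝ) * η)) (Real.cos ((j:ℝ) * x) * j) x := by
      have h0 : HasDerivAt (fun η : ℝ => (j:ℝ) * η) (j:ℝ) x := by
        simpa using (hasDerivAt_id x).const_mul (j:ℝ)
      exact (Real.hasDerivAt_sin _).comp x h0
    have hF : HasDerivAt F
        (2 / (2 - γ) * (Real.cos (x / 2) * (1/2) * (2 - γ) * Real.sin (x / 2) ^ (2 - γ - 1) *
          Real.sin ((j:ℝ) * x) + Real.sin (x / 2) ^ (2 - γ) * (Real.cos ((j:ℝ) * x) * j))) x :=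
      (hr.mul hsj).const_mul _
    have heq : 2 / (2 - γ) * (Real.cos (x / 2) * (1/2) * (2 - γ) * Real.sin (x / 2) ^ (2 - γ - 1) *
          Real.sin ((j:ℝ) * x) + Real.sin (x / 2) ^ (2 - γ) * (Real.cos ((j:ℝ) * x) * j))
        = g1 x + (2 * j / (2 - γ)) * g2 x := by
      rw [show (2:ℝ) - γ - 1 = 1 - γ by ring]
      simp only [hg1d, hg2d]
      field_simp
    exact (heq ▸ hF).hasDerivWithinAt
  have hint : IntervalIntegrable (fun x => g1 x + (2 * j / (2 - γ)) * g2 x) volume 0 (2*π) :=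
    hg1.add (hg2.const_mul _)
  have hFTC := intervalIntegral.integral_eq_sub_of_hasDeriv_right_of_le (by positivity)
    hFcont.continuousOn hderiv hint
  have hF0 : F 0 = 0 := by simp [hFd]
  have hF2π : F (2*π) = 0 := by
    simp only [hFd, show 2*π/2 = π by ring, Real.sin_pi, Real.zero_rpow hγ]
    ring
  rw [hF0, hF2π, sub_zero,
    intervalIntegral.integral_add hg1 (hg2.const_mul _),
    intervalIntegral.integral_const_mul] at hFTC
  linarith

/-- For `γ ∈ (1,2)`, an integer `j ≥ 1` and `β ∈ ℝ`,
`(1/(2π)) ∫₀^{2π} sin(j(β−η))·cos(η/2)·(sin(η/2))^{1−γ} dη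
  = (2j/(2−γ))·cos(jβ)·(1/(2π)) ∫₀^{2π} cos(jη)·(sin(η/2))^{2−γ} dη`. -/
theorem integral_sin_shift_cos_half (γ : ℝ) (h1 : 1 < γ) (h2 : γ < 2)
    (j : ℕ) (hj : 1 ≤ j) (β : ℝ) :
    (1 / (2 * Real.pi)) *
        ∫ η in (0 : ℝ)..(2 * Real.pi),
          Real.sin (j * (β - η)) * Real.cos (η / 2) * Real.sin (η / 2) ^ (1 - γ) =
      (2 * j / (2 - γ)) * Real.cos (j * β) *
        ((1 / (2 * Real.pi)) *
          ∫ η in (0 : ℝ)..(2 * Real.pi),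
            Real.cos (j * η) * Real.sin (η / 2) ^ (2 - γ)) := by
  have hπ := Real.pi_pos
  have hf1 : IntervalIntegrable
      (fun η => Real.cos (j * η) * Real.cos (η / 2) * Real.sin (η / 2) ^ (1 - γ))
      volume 0 (2*π) := by
    have := integrable_mul_sin_half_rpow γ h1 h2
      (fun η => Real.cos (j * η) * Real.cos (η / 2))
      (((Real.continuous_cos.comp (continuous_const.mul continuous_id))).mul
        (Real.continuous_cos.comp (continuous_id.div_const 2)))
      (fun x => by
        rw [abs_mul]
        exact mul_le_one₀ (Real.abs_cos_le_one _) (abs_nonneg _) (Real.abs_cos_le_one _))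
    simpa [mul_assoc] using this
  have hf2 : IntervalIntegrable
      (fun η => Real.sin (j * η) * Real.cos (η / 2) * Real.sin (η / 2) ^ (1 - γ))
      volume 0 (2*π) := by
    have := integrable_mul_sin_half_rpow γ h1 h2
      (fun η => Real.sin (j * η) * Real.cos (η / 2))
      (((Real.continuous_sin.comp (continuous_const.mul continuous_id))).mul
        (Real.continuous_cos.comp (continuous_id.div_const 2)))
      (fun x => by
        rw [abs_mul]
        exact mul_le_one₀ (Real.abs_sin_le_one _) (abs_nonneg _) (Real.abs_cos_le_one _))
    simpa [mul_assoc] using this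
  have hsplit : (∫ η in (0 : ℝ)..(2 * π),
      Real.sin (j * (β - η)) * Real.cos (η / 2) * Real.sin (η / 2) ^ (1 - γ))
      = Real.sin (j * β) * (∫ η in (0 : ℝ)..(2 * π),
          Real.cos (j * η) * Real.cos (η / 2) * Real.sin (η / 2) ^ (1 - γ))
        - Real.cos (j * β) * (∫ η in (0 : ℝ)..(2 * π),
          Real.sin (j * η) * Real.cos (η / 2) * Real.sin (η / 2) ^ (1 - γ)) := by
    rw [← intervalIntegral.integral_const_mul, ← intervalIntegral.integral_const_mul,
      ← intervalIntegral.integral_sub (hf1.const_mul _) (hf2.const_mul _)]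
    refine intervalIntegral.integral_congr fun x _ => ?_
    have : Real.sin ((j:ℝ) * (β - x))
        = Real.sin ((j:ℝ) * β) * Real.cos ((j:ℝ) * x)
          - Real.cos ((j:ℝ) * β) * Real.sin ((j:ℝ) * x) := by
      rw [mul_sub, Real.sin_sub]
    simp only [this]; ring
  rw [hsplit, cos_part_zero γ j, sin_part_ibp γ h1 h2 j]
  ring
end

section
/- Let γ ∈ (1,2), let j ≥ 1 be an integer and let β ∈ ℝ. Then (1/(2π)) ∫₀^{2π} sin(j(β−η)) · sin(η) / (4 sin²(η/2))^{γ/2} dη = [ j · (−1)^j · Γ(3−γ) / ((2−γ) · Γ(2 + j − γ/2) · Γ(2 − j − γ/2)) ] · cos(jβ). -/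
open MeasureTheory intervalIntegral Real Set

namespace SKAux

lemma kernel_int_half {b : ℝ} (hb1 : -1 < b) (hb0 : b < 0) :
    IntervalIntegrable (fun x => (2 * Real.sin x) ^ b) volume 0 (π/2) := by
  have hπ : (0:ℝ) < π := Real.pi_pos
  have hg : IntervalIntegrable (fun x : ℝ => (4/π)^b * x ^ b) volume 0 (π/2) :=
    (intervalIntegrable_rpow' hb1).const_mul _
  refine hg.mono_fun ?_ ?_
  · rw [Set.uIoc_of_le (by positivity)]
    refine ContinuousOn.aestronglyMeasurable ?_ measurableSet_Ioc
    refine ((continuous_const.mul Real.continuous_sin).continuousOn).rpow_const fun x hx => Or.inl ?_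
    have : 0 < Real.sin x := Real.sin_pos_of_pos_of_lt_pi hx.1 (by linarith [hx.2, Real.pi_pos])
    exact (mul_pos two_pos this).ne'
  · rw [Set.uIoc_of_le (by positivity)]
    filter_upwards [ae_restrict_mem measurableSet_Ioc] with x hx
    have hx0 : 0 < x := hx.1
    have hs : 4/π * x ≤ 2 * Real.sin x := by
      have h := Real.mul_le_sin hx0.le hx.2
      have : 4/π * x = 2 * (2/π * x) := by ring
      linarith
    have h4 : 0 < 4/π * x := by positivity
    have hle : (2 * Real.sin x) ^ b ≤ (4/π * x) ^ b :=
      Real.rpow_le_rpow_of_nonpos h4 hs hb0.le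
    have hb' : (4/π * x) ^ b = (4/π)^b * x ^ b :=
      Real.mul_rpow (by positivity) hx0.le
    rw [Real.norm_eq_abs, Real.norm_eq_abs, abs_of_nonneg (Real.rpow_nonneg (by nlinarith [Real.sin_nonneg_of_nonneg_of_le_pi hx0.le (by linarith [hx.2])]) _), abs_of_nonneg (by positivity)]
    rw [← hb']; exact hle

lemma kernel_int {b : ℝ} (hb1 : -1 < b) (hb0 : b < 0) :
    IntervalIntegrable (fun x => (2 * Real.sin x) ^ b) volume 0 π := by
  have h1 := kernel_int_half hb1 hb0
  have h2 := (kernel_int_half hb1 hb0).comp_sub_left π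
  have : (fun x => (2 * Real.sin (π - x)) ^ b) = fun x => (2 * Real.sin x) ^ b := by
    funext x; rw [Real.sin_pi_sub]
  rw [this] at h2
  simp only [sub_zero, sub_self] at h2
  -- h2 : IntervalIntegrable _ volume (π - π/2) (π - 0) hopefully
  have h2' : IntervalIntegrable (fun x => (2 * Real.sin x) ^ b) volume (π/2) π := by
    have : π - π/2 = π/2 := by ring
    simpa [this] using h2.symm
  exact h1.trans h2'

end SKAux

namespace SKAux2
open SKAux

noncomputable def T (b : ℝ) (k : ℕ) : ℝ :=
  ∫ x in (0:ℝ)..π, (2 * Real.sin x) ^ b * Real.sin ((2*(k:ℝ)+1) * x)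

lemma T_integrand_int {b : ℝ} (hb1 : -1 < b) (hb0 : b < 0) (c : ℝ) :
    IntervalIntegrable (fun x => (2 * Real.sin x) ^ b * Real.sin (c * x)) volume 0 π :=
  (kernel_int hb1 hb0).mul_continuousOn
    ((Real.continuous_sin.comp (continuous_const.mul continuous_id)).continuousOn)

lemma T_rec {b : ℝ} (hb1 : -1 < b) (hb0 : b < 0) (k : ℕ) :
    (b + (2*(k:ℝ)+3)) * T b (k+1) = (2*(k:ℝ)+1 - b) * T b k := by
  have hπ : (0:ℝ) < π := Real.pi_pos
  set c : ℝ := 2*(k:ℝ)+2 with hc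
  set m : ℝ := 2*(k:ℝ)+3 with hm
  set g : ℝ → ℝ := fun x => (2 * Real.sin x) ^ (b+1) * Real.sin (c * x) with hg
  set g' : ℝ → ℝ := fun x => (2 * Real.sin x) ^ b *
      ((b + m) * Real.sin (m * x) + (b + 2 - m) * Real.sin ((m-2) * x)) with hg'
  have hb1' : (0:ℝ) < b + 1 := by linarith
  have hcont : ContinuousOn g (Icc 0 π) := by
    apply Continuous.continuousOn
    exact ((continuous_const.mul Real.continuous_sin).rpow_const
        (fun x => Or.inr hb1'.le)).mul
      (Real.continuous_sin.comp (continuous_const.mul continuous_id))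
  have hderiv : ∀ x ∈ Ioo (0:ℝ) π, HasDerivWithinAt g (g' x) (Ioi x) x := by
    intro x hx
    have hsx : 0 < Real.sin x := Real.sin_pos_of_pos_of_lt_pi hx.1 hx.2
    have hsx2 : (0:ℝ) < 2 * Real.sin x := by linarith
    have h1 : HasDerivAt (fun x => 2 * Real.sin x) (2 * Real.cos x) x := by
      simpa using (Real.hasDerivAt_sin x).const_mul 2
    have h2 : HasDerivAt (fun x => (2 * Real.sin x) ^ (b+1))
        ((b+1) * (2 * Real.sin x) ^ b * (2 * Real.cos x)) x := by
      have h := h1.rpow_const (p := b+1) (Or.inl hsx2.ne')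
      simp only [add_sub_cancel_right] at h
      convert h using 1; ring
    have hmul : HasDerivAt (fun x : ℝ => c * x) c x := by
      simpa using (hasDerivAt_id x).const_mul c
    have h3 : HasDerivAt (fun x => Real.sin (c * x)) (Real.cos (c * x) * c) x := hmul.sin
    have H := h2.mul h3
    have hexp : (b+1) * (2 * Real.sin x) ^ b * (2 * Real.cos x) * Real.sin (c * x)
        + (2 * Real.sin x) ^ (b+1) * (Real.cos (c * x) * c) = g' x := by
      have hpow : (2 * Real.sin x) ^ (b+1) = (2 * Real.sin x) ^ b * (2 * Real.sin x) := by
        rw [Real.rpow_add hsx2, Real.rpow_one]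
      have hmx : m * x = c * x + x := by rw [hm, hc]; ring
      have hm2x : (m - 2) * x = c * x - x := by rw [hm, hc]; ring
      simp only [hg', hpow, hmx, hm2x, Real.sin_add, Real.sin_sub]
      ring
    rw [← hexp]
    exact H.hasDerivWithinAt
  have hint : IntervalIntegrable g' volume 0 π := by
    apply (kernel_int hb1 hb0).mul_continuousOn
    apply Continuous.continuousOn
    exact (continuous_const.mul (Real.continuous_sin.comp
        (continuous_const.mul continuous_id))).add
      (continuous_const.mul (Real.continuous_sin.comp (continuous_const.mul continuous_id)))
  have hFTC := intervalIntegral.integral_eq_sub_of_hasDeriv_right_of_le hπ.le hcont hderiv hint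
  have hg0 : g 0 = 0 := by simp [hg]
  have hgπ : g π = 0 := by simp [hg, Real.zero_rpow hb1'.ne']
  rw [hg0, hgπ, sub_zero] at hFTC
  -- split the integral
  have e1 : ∀ x, g' x = (b+m) * ((2 * Real.sin x) ^ b * Real.sin (m * x))
      + (b+2-m) * ((2 * Real.sin x) ^ b * Real.sin ((m-2) * x)) := by
    intro x; rw [hg']; ring
  rw [intervalIntegral.integral_congr (fun x _ => e1 x)] at hFTC
  rw [intervalIntegral.integral_add (((T_integrand_int hb1 hb0 m).const_mul _))
      (((T_integrand_int hb1 hb0 (m-2)).const_mul _)),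
    intervalIntegral.integral_const_mul, intervalIntegral.integral_const_mul] at hFTC
  have harg1 : ∀ x:ℝ, Real.sin (m * x) = Real.sin ((2*((k+1:ℕ):ℝ)+1) * x) := by
    intro x; congr 1; push_cast [hm]; ring
  have harg2 : ∀ x:ℝ, Real.sin ((m-2) * x) = Real.sin ((2*(k:ℝ)+1) * x) := by
    intro x; congr 1; push_cast [hm]; ring
  have hTm : (∫ x in (0:ℝ)..π, (2 * Real.sin x) ^ b * Real.sin (m * x)) = T b (k+1) := by
    rw [T]; exact intervalIntegral.integral_congr fun x _ => by rw [harg1]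
  have hTm2 : (∫ x in (0:ℝ)..π, (2 * Real.sin x) ^ b * Real.sin ((m-2) * x)) = T b k := by
    rw [T]; exact intervalIntegral.integral_congr fun x _ => by rw [harg2]
  rw [hTm, hTm2, hm] at hFTC
  linear_combination hFTC

lemma real_beta {u v : ℝ} (hu : 0 < u) (hv : 0 < v) :
    Real.Gamma u * Real.Gamma v
      = Real.Gamma (u+v) * ∫ x in (0:ℝ)..1, x^(u-1) * (1-x)^(v-1) := by
  have h := Complex.Gamma_mul_Gamma_eq_betaIntegral (s := (u:ℂ)) (t := (v:ℂ))
    (by simpa using hu) (by simpa using hv)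
  rw [Complex.betaIntegral] at h
  have hI : (∫ x : ℝ in (0:ℝ)..1, (x:ℂ) ^ ((u:ℂ) - 1) * (1 - (x:ℂ)) ^ ((v:ℂ) - 1))
      = ((∫ x in (0:ℝ)..1, x^(u-1) * (1-x)^(v-1) : ℝ) : ℂ) := by
    rw [← intervalIntegral.integral_ofReal]
    apply intervalIntegral.integral_congr
    intro x hx
    rw [Set.uIcc_of_le (by norm_num)] at hx
    show (x:ℂ) ^ ((u:ℂ) - 1) * (1 - (x:ℂ)) ^ ((v:ℂ) - 1)
        = ((x ^ (u-1) * (1-x) ^ (v-1) : ℝ) : ℂ)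
    push_cast
    rw [Complex.ofReal_cpow hx.1, Complex.ofReal_cpow (by linarith [hx.2] : (0:ℝ) ≤ 1 - x)]
    push_cast
    ring
  rw [hI] at h
  have h2 : ((Real.Gamma u * Real.Gamma v : ℝ) : ℂ)
      = ((Real.Gamma (u+v) * ∫ x in (0:ℝ)..1, x^(u-1) * (1-x)^(v-1) : ℝ) : ℂ) := by
    push_cast
    rw [← Complex.Gamma_ofReal, ← Complex.Gamma_ofReal, ← Complex.Gamma_ofReal] at *
    push_cast at h ⊢
    exact h
  exact_mod_cast h2

lemma image_sin_sq : (fun t => Real.sin t ^ 2) '' (Ioo (0:ℝ) (π/2)) = Ioo (0:ℝ) 1 := by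
  have hπ : (0:ℝ) < π := Real.pi_pos
  apply Subset.antisymm
  · rintro _ ⟨t, ht, rfl⟩
    have hs : 0 < Real.sin t := Real.sin_pos_of_pos_of_lt_pi ht.1 (by linarith [ht.2])
    have hs1 : Real.sin t < 1 := by
      have := Real.strictMonoOn_sin (a := t) (b := π/2)
        ⟨by linarith [ht.1], (ht.2).le⟩ ⟨by linarith, le_refl _⟩ ht.2
      simpa using this
    refine ⟨by positivity, ?_⟩
    show Real.sin t ^ 2 < 1
    nlinarith
  · have hcont : ContinuousOn (fun t => Real.sin t ^ 2) (Icc (0:ℝ) (π/2)) :=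
      (Real.continuous_sin.pow 2).continuousOn
    have := intermediate_value_Ioo (by linarith : (0:ℝ) ≤ π/2) hcont
    simpa using this

lemma injOn_sin_sq : InjOn (fun t => Real.sin t ^ 2) (Ioo (0:ℝ) (π/2)) := by
  have hπ : (0:ℝ) < π := Real.pi_pos
  intro x hx y hy h
  have hsx : 0 < Real.sin x := Real.sin_pos_of_pos_of_lt_pi hx.1 (by linarith [hx.2])
  have hsy : 0 < Real.sin y := Real.sin_pos_of_pos_of_lt_pi hy.1 (by linarith [hy.2])
  have h3 : (Real.sin x - Real.sin y) * (Real.sin x + Real.sin y) = 0 := by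
    simp only at h
    nlinarith [h]
  have h4 : Real.sin x = Real.sin y := by
    rcases mul_eq_zero.1 h3 with h5 | h5
    · linarith
    · linarith
  exact Real.injOn_sin ⟨by linarith [hx.1], by linarith [hx.2]⟩
    ⟨by linarith [hy.1], by linarith [hy.2]⟩ h4

lemma subst_sin_sq (c : ℝ) (hc : 0 < c) :
    (∫ x in (0:ℝ)..1, x ^ ((c+1)/2 - 1) * (1-x) ^ ((1:ℝ)/2 - 1))
      = 2 * ∫ t in (0:ℝ)..(π/2), Real.sin t ^ c := by
  have hπ : (0:ℝ) < π := Real.pi_pos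
  have hder : ∀ t ∈ Ioo (0:ℝ) (π/2), HasDerivWithinAt (fun t => Real.sin t ^ 2)
      (2 * Real.sin t * Real.cos t) (Ioo (0:ℝ) (π/2)) t := by
    intro t _
    have := ((Real.hasDerivAt_sin t).pow 2).hasDerivWithinAt (s := Ioo (0:ℝ) (π/2))
    exact this.congr_deriv (by push_cast; ring)
  have key := integral_image_eq_integral_abs_deriv_smul measurableSet_Ioo hder injOn_sin_sq
    (fun x => x ^ ((c+1)/2 - 1) * (1-x) ^ ((1:ℝ)/2 - 1))
  rw [image_sin_sq] at key
  rw [intervalIntegral.integral_of_le (by norm_num : (0:ℝ) ≤ 1),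
    integral_Ioc_eq_integral_Ioo, key]
  have hcongr : ∀ t ∈ Ioo (0:ℝ) (π/2),
      |2 * Real.sin t * Real.cos t| •
        ((Real.sin t ^ 2) ^ ((c+1)/2 - 1) * (1 - Real.sin t ^ 2) ^ ((1:ℝ)/2 - 1))
      = 2 * Real.sin t ^ c := by
    intro t ht
    have hs : 0 < Real.sin t := Real.sin_pos_of_pos_of_lt_pi ht.1 (by linarith [ht.2])
    have hco : 0 < Real.cos t := Real.cos_pos_of_mem_Ioo ⟨by linarith [ht.1], ht.2⟩
    have e1 : (Real.sin t ^ 2) ^ ((c+1)/2 - 1) = Real.sin t ^ (c - 1) := by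
      rw [← Real.rpow_two, ← Real.rpow_mul hs.le]
      congr 1; ring
    have e2 : (1 - Real.sin t ^ 2) ^ ((1:ℝ)/2 - 1) = (Real.cos t) ^ (-1 : ℝ) := by
      rw [← Real.cos_sq', ← Real.rpow_two, ← Real.rpow_mul hco.le]
      congr 1; ring
    rw [e1, e2, Real.rpow_neg_one, Real.rpow_sub hs, Real.rpow_one, smul_eq_mul,
      abs_of_nonneg (by positivity)]
    field_simp
  rw [MeasureTheory.setIntegral_congr_fun measurableSet_Ioo hcongr,
    MeasureTheory.integral_const_mul, ← integral_Ioc_eq_integral_Ioo,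
    ← intervalIntegral.integral_of_le (by linarith : (0:ℝ) ≤ π/2)]


lemma integral_sin_rpow (c : ℝ) (hc : 0 < c) :
    ∫ t in (0:ℝ)..π, Real.sin t ^ c
      = Real.sqrt π * Real.Gamma ((c+1)/2) / Real.Gamma (c/2 + 1) := by
  have hπ : (0:ℝ) < π := Real.pi_pos
  have hcont : Continuous fun t : ℝ => Real.sin t ^ c :=
    Real.continuous_sin.rpow_const fun x => Or.inr hc.le
  have h2' := intervalIntegral.integral_comp_sub_left (a := 0) (b := π/2)
    (fun t => Real.sin t ^ c) π
  simp only [Real.sin_pi_sub, sub_zero] at h2'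
  rw [show π - π/2 = π/2 by ring] at h2'
  have h1 : ∫ t in (0:ℝ)..π, Real.sin t ^ c
      = (∫ t in (0:ℝ)..(π/2), Real.sin t ^ c) + ∫ t in (π/2:ℝ)..π, Real.sin t ^ c :=
    (intervalIntegral.integral_add_adjacent_intervals
      (hcont.intervalIntegrable _ _) (hcont.intervalIntegrable _ _)).symm
  have hsplit : ∫ t in (0:ℝ)..π, Real.sin t ^ c
      = 2 * ∫ t in (0:ℝ)..(π/2), Real.sin t ^ c := by
    rw [h1, ← h2']; ring
  have hb := real_beta (u := (c+1)/2) (v := (1:ℝ)/2) (by linarith) (by norm_num)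
  rw [subst_sin_sq c hc, show (c+1)/2 + (1:ℝ)/2 = c/2 + 1 by ring,
    Real.Gamma_one_half_eq] at hb
  have hΓ : 0 < Real.Gamma (c/2 + 1) := Real.Gamma_pos_of_pos (by linarith)
  rw [hsplit, eq_div_iff hΓ.ne']
  linear_combination -hb

lemma T_zero {b : ℝ} (hb1 : -1 < b) (hb0 : b < 0) :
    T b 0 = π * Real.Gamma (b+1) / (Real.Gamma ((b+3)/2) * Real.Gamma ((b+1)/2)) := by
  have hπ : (0:ℝ) < π := Real.pi_pos
  have hb1' : (0:ℝ) < b + 1 := by linarith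
  have hcongr : ∀ x ∈ Set.uIcc (0:ℝ) π,
      (2 * Real.sin x) ^ b * Real.sin ((2*((0:ℕ):ℝ)+1) * x)
        = (2:ℝ) ^ b * Real.sin x ^ (b+1) := by
    intro x hx
    rw [Set.uIcc_of_le hπ.le] at hx
    have hs : 0 ≤ Real.sin x := Real.sin_nonneg_of_nonneg_of_le_pi hx.1 hx.2
    simp only [Nat.cast_zero, mul_zero, zero_add, one_mul]
    rw [Real.mul_rpow (by norm_num) hs]
    rcases eq_or_lt_of_le hs with h | h
    · rw [← h, Real.zero_rpow (by linarith : b ≠ 0), Real.zero_rpow hb1'.ne']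
      ring
    · rw [Real.rpow_add h, Real.rpow_one]; ring
  have h0 : T b 0 = (2:ℝ)^b * ∫ x in (0:ℝ)..π, Real.sin x ^ (b+1) := by
    rw [T, intervalIntegral.integral_congr hcongr, intervalIntegral.integral_const_mul]
  rw [h0, integral_sin_rpow (b+1) hb1']
  have hdup := Real.Gamma_mul_Gamma_add_half ((b+1)/2)
  rw [show (b+1)/2 + 1/2 = (b+1+1)/2 by ring, show 2 * ((b+1)/2) = b + 1 by ring] at hdup
  have hΓ1 : 0 < Real.Gamma ((b+1)/2) := Real.Gamma_pos_of_pos (by linarith)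
  have hΓ2 : 0 < Real.Gamma ((b+1+1)/2) := Real.Gamma_pos_of_pos (by linarith)
  have hΓ3 : 0 < Real.Gamma ((b+3)/2) := Real.Gamma_pos_of_pos (by linarith)
  have h2b : (0:ℝ) < (2:ℝ) ^ b := Real.rpow_pos_of_pos (by norm_num) b
  have hsq : Real.sqrt π * Real.sqrt π = π := Real.mul_self_sqrt hπ.le
  rw [show (1:ℝ) - (b+1) = -b by ring] at hdup
  have hinv : (2:ℝ)^b * (2:ℝ)^(-b) = 1 := by
    rw [← Real.rpow_add (by norm_num)]; simp
  have hdup' : (2:ℝ)^b * Real.sqrt π * (Real.Gamma ((b+1)/2) * Real.Gamma ((b+1+1)/2))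
      = π * Real.Gamma (b+1) := by
    rw [hdup]
    linear_combination (Real.sqrt π * Real.sqrt π * Real.Gamma (b+1)) * hinv
      + (Real.Gamma (b+1)) * hsq
  rw [show (b+1)/2 + 1 = (b+3)/2 by ring]
  field_simp
  linear_combination hdup'

lemma Gamma_shift_ne {b : ℝ} (hb1 : -1 < b) (hb0 : b < 0) (k : ℕ) :
    Real.Gamma ((b+1)/2 - k) ≠ 0 := by
  apply Real.Gamma_ne_zero
  intro m h
  have h1 : (0:ℝ) < (b+1)/2 := by linarith
  have h2 : (b+1)/2 < 1 := by linarith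
  have h3 : (k:ℝ) - m = (b+1)/2 := by linarith
  have h4 : (m:ℝ) < k := by linarith
  have h5 : (k:ℝ) < m + 1 := by linarith
  have h6 : m < k := by exact_mod_cast h4
  have h7 : k < m + 1 := by exact_mod_cast h5
  omega

lemma T_closed {b : ℝ} (hb1 : -1 < b) (hb0 : b < 0) (k : ℕ) :
    T b k = (-1)^k * π * Real.Gamma (b+1) /
      (Real.Gamma ((b+3)/2 + k) * Real.Gamma ((b+1)/2 - k)) := by
  induction k with
  | zero => simpa using T_zero hb1 hb0
  | succ k ih =>
    have hrec := T_rec hb1 hb0 k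
    have hk0 : (0:ℝ) ≤ (k:ℝ) := Nat.cast_nonneg k
    have hd : (0:ℝ) < b + (2*(k:ℝ)+3) := by linarith
    have hA : Real.Gamma ((b+3)/2 + ((k+1:ℕ):ℝ))
        = ((b+3)/2 + k) * Real.Gamma ((b+3)/2 + k) := by
      rw [show (b+3)/2 + ((k+1:ℕ):ℝ) = ((b+3)/2 + k) + 1 by push_cast; ring]
      exact Real.Gamma_add_one (by nlinarith [Nat.cast_nonneg (α := ℝ) k])
    have hB : Real.Gamma ((b+1)/2 - (k:ℝ))
        = ((b+1)/2 - ((k+1:ℕ):ℝ)) * Real.Gamma ((b+1)/2 - ((k+1:ℕ):ℝ)) := by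
      rw [show (b+1)/2 - (k:ℝ) = ((b+1)/2 - ((k+1:ℕ):ℝ)) + 1 by push_cast; ring]
      refine Real.Gamma_add_one (by push_cast; intro hcon; nlinarith [Nat.cast_nonneg (α := ℝ) k])
    have hAne : Real.Gamma ((b+3)/2 + (k:ℝ)) ≠ 0 :=
      (Real.Gamma_pos_of_pos (by nlinarith [Nat.cast_nonneg (α := ℝ) k])).ne'
    have hBne : Real.Gamma ((b+1)/2 - ((k+1:ℕ):ℝ)) ≠ 0 := Gamma_shift_ne hb1 hb0 (k+1)
    have hB2ne : Real.Gamma ((b+1)/2 - (k:ℝ)) ≠ 0 := Gamma_shift_ne hb1 hb0 k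
    have hfac : ((b+1)/2 - ((k+1:ℕ):ℝ)) ≠ 0 := by
      push_cast; intro hcon; nlinarith [Nat.cast_nonneg (α := ℝ) k]
    have hT : T b (k+1) = (2*(k:ℝ)+1 - b) / (b + (2*(k:ℝ)+3)) * T b k := by
      field_simp
      linarith [hrec]
    have hA2ne : ((b+3)/2 + (k:ℝ)) ≠ 0 := by nlinarith [Nat.cast_nonneg (α := ℝ) k]
    rw [hT, ih, hA, hB, pow_succ, div_mul_div_comm,
      div_eq_div_iff (by exact mul_ne_zero hd.ne' (mul_ne_zero hAne (mul_ne_zero hfac hBne)))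
        (by exact mul_ne_zero (mul_ne_zero hA2ne hAne) hBne)]
    push_cast
    ring
end SKAux2

set_option maxHeartbeats 1000000 in
open SKAux SKAux2 in
/-- For `γ ∈ (1,2)`, an integer `j ≥ 1` and `β ∈ ℝ`,
`(1/(2π)) ∫₀^{2π} sin(j(β−η))·sin(η)/(4 sin²(η/2))^{γ/2} dη
  = [j·(−1)^j·Γ(3−γ)/((2−γ)·Γ(2+j−γ/2)·Γ(2−j−γ/2))]·cos(jβ)`. -/
theorem integral_sin_shift_sin_kernel (γ : ℝ) (h1 : 1 < γ) (h2 : γ < 2)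
    (j : ℕ) (hj : 1 ≤ j) (β : ℝ) :
    (1 / (2 * Real.pi)) *
        ∫ η in (0 : ℝ)..(2 * Real.pi),
          Real.sin (j * (β - η)) * Real.sin η /
            (4 * Real.sin (η / 2) ^ 2) ^ (γ / 2) =
      (j * (-1 : ℝ) ^ j * Real.Gamma (3 - γ) /
          ((2 - γ) * Real.Gamma (2 + j - γ / 2) * Real.Gamma (2 - j - γ / 2))) *
        Real.cos (j * β) := by
  have hπ : (0:ℝ) < π := Real.pi_pos
  set b : ℝ := 1 - γ with hbdef
  have hb1 : -1 < b := by rw [hbdef]; linarith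
  have hb0 : b < 0 := by rw [hbdef]; linarith
  set H : ℝ → ℝ := fun x => Real.sin ((j:ℝ)*β - 2*(j:ℝ)*x) * (Real.cos x * (2*Real.sin x)^b)
    with hH
  -- Step 1: pointwise rewrite of the integrand
  have hcongr : ∀ η ∈ Set.uIcc (0:ℝ) (2*π),
      Real.sin (j * (β - η)) * Real.sin η / (4 * Real.sin (η / 2) ^ 2) ^ (γ / 2)
        = H (η/2) := by
    intro η hη
    rw [Set.uIcc_of_le (by linarith)] at hη
    have hx1 : 0 ≤ η/2 := by linarith [hη.1]
    have hx2 : η/2 ≤ π := by linarith [hη.2]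
    have hs : 0 ≤ Real.sin (η/2) := Real.sin_nonneg_of_nonneg_of_le_pi hx1 hx2
    have hden : (4 * Real.sin (η / 2) ^ 2) ^ (γ / 2) = (2 * Real.sin (η/2)) ^ γ := by
      rw [show (4 * Real.sin (η / 2) ^ 2) = (2 * Real.sin (η/2))^2 by ring,
        ← Real.rpow_two, ← Real.rpow_mul (by linarith)]
      congr 1; ring
    have hsinη : Real.sin η = 2 * Real.sin (η/2) * Real.cos (η/2) := by
      rw [show η = 2 * (η/2) by ring, Real.sin_two_mul]
      ring_nf
    have harg : (j:ℝ) * (β - η) = (j:ℝ)*β - 2*(j:ℝ)*(η/2) := by ring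
    rw [hden, hsinη, hH, harg]
    rcases eq_or_lt_of_le hs with h | h
    · simp [← h, Real.zero_rpow (show γ ≠ 0 from (lt_trans zero_lt_one h1).ne'),
        Real.zero_rpow hb0.ne]
    · have h2s : 0 < 2 * Real.sin (η/2) := by linarith
      have hpow : (2*Real.sin (η/2)) ^ (-γ) * (2 * Real.sin (η/2))
          = (2*Real.sin (η/2))^b := by
        nth_rewrite 2 [← Real.rpow_one (2*Real.sin (η/2))]
        rw [← Real.rpow_add h2s, hbdef, show -γ + 1 = 1 - γ by ring]
      rw [div_eq_mul_inv, ← Real.rpow_neg h2s.le]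
      simp only [hH]
      rw [← hpow]
      ring
  rw [intervalIntegral.integral_congr hcongr]
  -- Step 2: substitution η = 2x
  have hsub := intervalIntegral.integral_comp_div (a := 0) (b := 2*π) (c := 2) H (by norm_num)
  rw [show (2*π)/2 = π by ring, show (0:ℝ)/2 = 0 by norm_num] at hsub
  rw [hsub]
  -- Step 3: expand and split
  have hEsplit : (∫ x in (0:ℝ)..π, H x)
      = Real.sin ((j:ℝ)*β) * (∫ x in (0:ℝ)..π,
          (2*Real.sin x)^b * (Real.cos (2*(j:ℝ)*x) * Real.cos x))
        - Real.cos ((j:ℝ)*β) * (∫ x in (0:ℝ)..π,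
          (2*Real.sin x)^b * (Real.sin (2*(j:ℝ)*x) * Real.cos x)) := by
    have c1 : Continuous fun x : ℝ => Real.cos (2*(j:ℝ)*x) * Real.cos x :=
      (Real.continuous_cos.comp (continuous_const.mul continuous_id)).mul Real.continuous_cos
    have c2 : Continuous fun x : ℝ => Real.sin (2*(j:ℝ)*x) * Real.cos x :=
      (Real.continuous_sin.comp (continuous_const.mul continuous_id)).mul Real.continuous_cos
    have e1 : (∫ x in (0:ℝ)..π, H x)
        = ∫ x in (0:ℝ)..π,
            (Real.sin ((j:ℝ)*β) * ((2*Real.sin x)^b * (Real.cos (2*(j:ℝ)*x) * Real.cos x))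
              - Real.cos ((j:ℝ)*β) * ((2*Real.sin x)^b * (Real.sin (2*(j:ℝ)*x) * Real.cos x))) := by
      apply intervalIntegral.integral_congr
      intro x _
      rw [hH]
      simp only [Real.sin_sub]
      ring
    rw [e1, intervalIntegral.integral_sub
        (((kernel_int hb1 hb0).mul_continuousOn c1.continuousOn).const_mul _)
        (((kernel_int hb1 hb0).mul_continuousOn c2.continuousOn).const_mul _),
      intervalIntegral.integral_const_mul, intervalIntegral.integral_const_mul]
  -- Step 4: the cosine term vanishes
  have hE1 : (∫ x in (0:ℝ)..π, (2*Real.sin x)^b * (Real.cos (2*(j:ℝ)*x) * Real.cos x)) = 0 := by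
    set P : ℝ → ℝ := fun x => (2*Real.sin x)^b * (Real.cos (2*(j:ℝ)*x) * Real.cos x) with hP
    have hrefl := intervalIntegral.integral_comp_sub_left (a := 0) (b := π) P π
    rw [sub_zero, show π - π = 0 by ring] at hrefl
    have hneg : ∀ x ∈ Set.uIcc (0:ℝ) π, P (π - x) = -(P x) := by
      intro x _
      rw [hP]
      simp only
      rw [Real.sin_pi_sub, Real.cos_pi_sub,
        show 2*(j:ℝ)*(π - x) = (j:ℝ)*(2*π) - 2*(j:ℝ)*x by ring,
        Real.cos_nat_mul_two_pi_sub]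
      ring
    rw [intervalIntegral.integral_congr hneg, intervalIntegral.integral_neg] at hrefl
    linarith [hrefl]
  -- Step 5: the sine term
  have hE2 : (∫ x in (0:ℝ)..π, (2*Real.sin x)^b * (Real.sin (2*(j:ℝ)*x) * Real.cos x))
      = (T b j + T b (j-1)) / 2 := by
    have hpt : ∀ x ∈ Set.uIcc (0:ℝ) π,
        (2*Real.sin x)^b * (Real.sin (2*(j:ℝ)*x) * Real.cos x)
        = ((1:ℝ)/2) * ((2*Real.sin x)^b * Real.sin ((2*(j:ℝ)+1)*x))
          + ((1:ℝ)/2) * ((2*Real.sin x)^b * Real.sin ((2*(j:ℝ)-1)*x)) := by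
      intro x _
      have e : Real.sin ((2*(j:ℝ)+1)*x) + Real.sin ((2*(j:ℝ)-1)*x)
          = 2 * Real.sin (2*(j:ℝ)*x) * Real.cos x := by
        rw [show (2*(j:ℝ)+1)*x = 2*(j:ℝ)*x + x by ring,
          show (2*(j:ℝ)-1)*x = 2*(j:ℝ)*x - x by ring, Real.sin_add, Real.sin_sub]
        ring
      linear_combination (-((2*Real.sin x)^b)/2) * e
    rw [intervalIntegral.integral_congr hpt, intervalIntegral.integral_add
        ((T_integrand_int hb1 hb0 _).const_mul _) ((T_integrand_int hb1 hb0 _).const_mul _),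
      intervalIntegral.integral_const_mul, intervalIntegral.integral_const_mul]
    have hTj : (∫ x in (0:ℝ)..π, (2*Real.sin x)^b * Real.sin ((2*(j:ℝ)+1)*x)) = T b j := rfl
    have hTj1 : (∫ x in (0:ℝ)..π, (2*Real.sin x)^b * Real.sin ((2*(j:ℝ)-1)*x))
        = T b (j-1) := by
      rw [T]
      apply intervalIntegral.integral_congr
      intro x _
      congr 2
      push_cast [Nat.cast_sub hj]
      ring
    rw [hTj, hTj1]
    ring
  rw [smul_eq_mul, hEsplit, hE1, hE2]
  -- Step 7: final algebra
  have hj1 : (1:ℝ) ≤ (j:ℝ) := by exact_mod_cast hj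
  have hTcj := T_closed hb1 hb0 j
  have hTcj1 := T_closed hb1 hb0 (j-1)
  rw [show (b+3)/2 + (j:ℝ) = 2 + j - γ/2 by rw [hbdef]; ring,
    show (b+1)/2 - (j:ℝ) = 1 - j - γ/2 by rw [hbdef]; ring,
    show b + 1 = 2 - γ by rw [hbdef]; ring] at hTcj
  rw [show (b+3)/2 + ((j-1:ℕ):ℝ) = 1 + j - γ/2 by push_cast [Nat.cast_sub hj]; rw [hbdef]; ring,
    show (b+1)/2 - ((j-1:ℕ):ℝ) = 2 - j - γ/2 by push_cast [Nat.cast_sub hj]; rw [hbdef]; ring,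
    show b + 1 = 2 - γ by rw [hbdef]; ring] at hTcj1
  have hG3 : Real.Gamma (3-γ) = (2-γ) * Real.Gamma (2-γ) := by
    rw [show (3-γ) = (2-γ)+1 by ring]
    exact Real.Gamma_add_one (by linarith)
  have hA1 : Real.Gamma (2 + (j:ℝ) - γ/2)
      = (1 + (j:ℝ) - γ/2) * Real.Gamma (1 + (j:ℝ) - γ/2) := by
    rw [show (2 + (j:ℝ) - γ/2) = (1 + (j:ℝ) - γ/2) + 1 by ring]
    exact Real.Gamma_add_one (by linarith)
  have hB0 : Real.Gamma (2 - (j:ℝ) - γ/2)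
      = (1 - (j:ℝ) - γ/2) * Real.Gamma (1 - (j:ℝ) - γ/2) := by
    rw [show (2 - (j:ℝ) - γ/2) = (1 - (j:ℝ) - γ/2) + 1 by ring]
    exact Real.Gamma_add_one (by intro hc; nlinarith)
  have hB1ne : Real.Gamma (1 - (j:ℝ) - γ/2) ≠ 0 := by
    have := Gamma_shift_ne hb1 hb0 j
    rwa [show (b+1)/2 - (j:ℝ) = 1 - j - γ/2 by rw [hbdef]; ring] at this
  have hA0ne : Real.Gamma (1 + (j:ℝ) - γ/2) ≠ 0 :=
    (Real.Gamma_pos_of_pos (by linarith)).ne'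
  have hu : (1 + (j:ℝ) - γ/2) ≠ 0 := by intro hc; nlinarith
  have hv : (1 - (j:ℝ) - γ/2) ≠ 0 := by intro hc; nlinarith
  have h2γ : (2:ℝ) - γ ≠ 0 := by intro hc; nlinarith
  have hpow : (-1:ℝ)^j = (-1:ℝ)^(j-1) * (-1) := by
    conv_lhs => rw [show j = (j-1)+1 from (Nat.succ_pred_eq_of_pos hj).symm]
    rw [pow_succ]
  suffices hS : -(T b j + T b (j-1)) / (2*π)
      = (j:ℝ) * (-1)^j * Real.Gamma (3-γ)
        / ((2-γ) * Real.Gamma (2 + (j:ℝ) - γ/2) * Real.Gamma (2 - (j:ℝ) - γ/2)) by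
    rw [← hS]
    field_simp
    ring
  rw [hTcj, hTcj1, hG3, hA1, hB0, hpow,
    div_add_div _ _ (mul_ne_zero (mul_ne_zero hu hA0ne) hB1ne)
      (mul_ne_zero hA0ne (mul_ne_zero hv hB1ne)),
    ← neg_div, div_div,
    div_eq_div_iff
      (mul_ne_zero (mul_ne_zero (mul_ne_zero (mul_ne_zero hu hA0ne) hB1ne)
        (mul_ne_zero hA0ne (mul_ne_zero hv hB1ne))) (by positivity))
      (mul_ne_zero (mul_ne_zero h2γ (mul_ne_zero hu hA0ne)) (mul_ne_zero hv hB1ne))]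
  ring
end

section
/- Let γ ∈ (1,2). Then for every β ∈ ℝ: (1−γ/2)·(1/(2π)) ∫₀^{2π} [sin(β−η) · sin(η) / (4 sin²(η/2))^{γ/2}] dη = (1/(2π)) ∫₀^{2π} [(cos(β) − cos(β−η)) · cos(η) / (4 sin²(η/2))^{γ/2}] dη, and (1−γ/2)·(1/(2π)) ∫₀^{2π} [cos(β−η) · sin(η) / (4 sin²(η/2))^{γ/2}] dη = −(1/(2π)) ∫₀^{2π} [(sin(β) − sin(β−η)) · cos(η) / (4 sin²(η/2))^{γ/2}] dη. -/
open Real MeasureTheory Set intervalIntegral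

namespace FirstModeAux

/-- The dominating function. -/
noncomputable def W (γ : ℝ) (η : ℝ) : ℝ := (2 * Real.sin (η / 2)) ^ (1 - γ)

lemma W_meas (γ : ℝ) : Measurable (W γ) := by
  unfold W
  fun_prop

lemma W_int (γ : ℝ) (h1 : 1 < γ) (h2 : γ < 2) :
    IntervalIntegrable (W γ) volume 0 (2 * π) := by
  have hπ := Real.pi_pos
  have hexp : (-1 : ℝ) < 1 - γ := by linarith
  have hbase : IntervalIntegrable (fun η : ℝ => (2 / π) ^ (1 - γ) * η ^ (1 - γ))
      volume 0 π := (intervalIntegral.intervalIntegrable_rpow' hexp).const_mul _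
  have half1 : IntervalIntegrable (W γ) volume 0 π := by
    refine hbase.mono_fun ((W_meas γ).aestronglyMeasurable) ?_
    rw [uIoc_of_le hπ.le]
    refine Filter.eventually_of_mem (self_mem_ae_restrict measurableSet_Ioc) ?_
    intro η hη
    obtain ⟨hη0, hηπ⟩ := hη
    have hsin : η / π ≤ Real.sin (η / 2) := by
      have := Real.mul_le_sin (x := η / 2) (by linarith) (by linarith)
      calc η / π = 2 / π * (η / 2) := by ring
        _ ≤ Real.sin (η / 2) := this
    have hηπpos : 0 < 2 / π * η := by positivity
    have hle : 2 / π * η ≤ 2 * Real.sin (η / 2) := by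
      calc 2 / π * η = 2 * (η / π) := by ring
        _ ≤ 2 * Real.sin (η / 2) := by linarith
    have hWle : W γ η ≤ (2 / π * η) ^ (1 - γ) :=
      Real.rpow_le_rpow_of_nonpos hηπpos hle (by linarith)
    have hsplit : (2 / π * η) ^ (1 - γ) = (2 / π) ^ (1 - γ) * η ^ (1 - γ) :=
      Real.mul_rpow (by positivity) hη0.le
    have hWnn : 0 ≤ W γ η := Real.rpow_nonneg (by nlinarith [hsin]) _
    simp only [Real.norm_eq_abs, abs_of_nonneg hWnn]
    rw [hsplit] at hWle
    exact hWle.trans (le_abs_self _)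
  have half2 : IntervalIntegrable (W γ) volume π (2 * π) := by
    have h := (half1.comp_sub_left (2 * π)).symm
    have heq : (fun x => W γ (2 * π - x)) = W γ := by
      funext x
      unfold W
      rw [show (2 * π - x) / 2 = π - x / 2 by ring, Real.sin_pi_sub]
    rw [heq, show 2 * π - π = π by ring] at h
    simpa using h
  exact half1.trans half2

/-- Generic integrability of `num η / (4 sin²(η/2))^{γ/2}`. -/
lemma int_aux (γ : ℝ) (h1 : 1 < γ) (h2 : γ < 2) (num : ℝ → ℝ) (hc : Measurable num)
    (hb : ∀ η ∈ Ioc (0 : ℝ) (2 * π), |num η| ≤ 2 * Real.sin (η / 2)) :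
    IntervalIntegrable (fun η => num η / (4 * Real.sin (η / 2) ^ 2) ^ (γ / 2))
      volume 0 (2 * π) := by
  have hπ := Real.pi_pos
  refine (W_int γ h1 h2).mono_fun ?_ ?_
  · apply Measurable.aestronglyMeasurable
    fun_prop
  · rw [uIoc_of_le (by linarith : (0:ℝ) ≤ 2 * π)]
    refine Filter.eventually_of_mem (self_mem_ae_restrict measurableSet_Ioc) ?_
    intro η hη
    obtain ⟨hη0, hη2π⟩ := hη
    have hsnn : 0 ≤ Real.sin (η / 2) :=
      Real.sin_nonneg_of_nonneg_of_le_pi (by linarith) (by linarith)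
    have hWnn : 0 ≤ W γ η := Real.rpow_nonneg (by linarith) _
    rcases eq_or_lt_of_le hsnn with hs0 | hs
    · have : num η = 0 := by
        have := hb η ⟨hη0, hη2π⟩
        rw [← hs0] at this
        simp only [mul_zero] at this
        exact abs_eq_zero.mp (le_antisymm this (abs_nonneg _))
      simp only [this, zero_div, norm_zero, Real.norm_eq_abs, abs_of_nonneg hWnn]
      exact hWnn
    · have ht : (0:ℝ) < 2 * Real.sin (η / 2) := by linarith
      have hden : (4 * Real.sin (η / 2) ^ 2) ^ (γ / 2) = (2 * Real.sin (η / 2)) ^ γ := by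
        rw [show 4 * Real.sin (η / 2) ^ 2 = (2 * Real.sin (η / 2)) ^ (2:ℕ) by ring,
          ← Real.rpow_natCast (2 * Real.sin (η / 2)) 2, ← Real.rpow_mul ht.le]
        congr 1
        ring
      have hdpos : (0:ℝ) < (2 * Real.sin (η / 2)) ^ γ := Real.rpow_pos_of_pos ht _
      have hWeq : W γ η = 2 * Real.sin (η / 2) / (2 * Real.sin (η / 2)) ^ γ := by
        unfold W
        rw [Real.rpow_sub ht, Real.rpow_one]
      simp only [Real.norm_eq_abs, abs_of_nonneg hWnn, hden]
      rw [abs_div, abs_of_pos hdpos, hWeq]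
      gcongr
      exact hb η ⟨hη0, hη2π⟩


/-- The antiderivative used for the FTC argument. -/
noncomputable def F (γ p q : ℝ) (η : ℝ) : ℝ :=
  p * ((2 * Real.sin (η / 2)) ^ (2 - γ) / (2 - γ)
      - (2 * Real.sin (η / 2)) ^ (4 - γ) / (2 * (4 - γ)))
  + q * (Real.sin η * (2 * Real.sin (η / 2)) ^ (2 - γ) / 2)

lemma ftc (γ : ℝ) (h1 : 1 < γ) (h2 : γ < 2) (p q : ℝ) (D : ℝ → ℝ)
    (hD : IntervalIntegrable D volume 0 (2 * π))
    (heq : ∀ η ∈ Ioo (0 : ℝ) (2 * π), D η =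
      p * (Real.cos (η / 2) * (2 * Real.sin (η / 2)) ^ (1 - γ)
            - Real.cos (η / 2) * (2 * Real.sin (η / 2)) ^ (3 - γ) / 2)
      + q * ((Real.cos η * (2 * Real.sin (η / 2)) ^ (2 - γ)
            + (2 - γ) * Real.sin η * Real.cos (η / 2) * (2 * Real.sin (η / 2)) ^ (1 - γ)) / 2)) :
    ∫ η in (0:ℝ)..(2 * π), D η = 0 := by
  have hπ := Real.pi_pos
  have h2γ : (2:ℝ) - γ ≠ 0 := by linarith
  have h4γ : (4:ℝ) - γ ≠ 0 := by linarith
  have hc1 : Continuous fun η : ℝ => 2 * Real.sin (η / 2) := by fun_prop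
  have hc2 : ∀ a : ℝ, 0 ≤ a → Continuous fun η : ℝ => (2 * Real.sin (η / 2)) ^ a :=
    fun a ha => hc1.rpow_const (fun x => Or.inr ha)
  have hFc : Continuous (F γ p q) := by
    apply Continuous.add
    · exact continuous_const.mul (((hc2 (2 - γ) (by linarith)).div_const _).sub
        ((hc2 (4 - γ) (by linarith)).div_const _))
    · exact continuous_const.mul ((Real.continuous_sin.mul
        (hc2 (2 - γ) (by linarith))).div_const 2)
  have hder : ∀ x ∈ Ioo (0:ℝ) (2 * π), HasDerivWithinAt (F γ p q) (D x) (Ioi x) x := by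
    intro x hx
    obtain ⟨hx0, hx2π⟩ := hx
    have hs : 0 < Real.sin (x / 2) :=
      Real.sin_pos_of_pos_of_lt_pi (by linarith) (by linarith)
    have ht : (0:ℝ) < 2 * Real.sin (x / 2) := by linarith
    have hd0 : HasDerivAt (fun η : ℝ => 2 * Real.sin (η / 2)) (Real.cos (x / 2)) x := by
      have hhalf : HasDerivAt (fun η : ℝ => η / 2) (1 / 2) x := (hasDerivAt_id x).div_const 2
      have hsin := (Real.hasDerivAt_sin (x / 2)).comp x hhalf
      have h2 := hsin.const_mul (2:ℝ)
      exact h2.congr_deriv (by ring)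
    have hpow : ∀ a : ℝ, HasDerivAt (fun η : ℝ => (2 * Real.sin (η / 2)) ^ a)
        (a * (2 * Real.sin (x / 2)) ^ (a - 1) * Real.cos (x / 2)) x := by
      intro a
      have h := (Real.hasDerivAt_rpow_const (x := 2 * Real.sin (x / 2)) (p := a)
        (Or.inl ht.ne')).comp x hd0
      exact h.congr_deriv (by ring)
    have hF : HasDerivAt (F γ p q)
        (p * (((2 - γ) * (2 * Real.sin (x / 2)) ^ (2 - γ - 1) * Real.cos (x / 2)) / (2 - γ)
          - ((4 - γ) * (2 * Real.sin (x / 2)) ^ (4 - γ - 1) * Real.cos (x / 2)) / (2 * (4 - γ)))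
        + q * ((Real.cos x * (2 * Real.sin (x / 2)) ^ (2 - γ)
          + Real.sin x * ((2 - γ) * (2 * Real.sin (x / 2)) ^ (2 - γ - 1) * Real.cos (x / 2))) / 2))
        x := by
      exact ((((hpow (2 - γ)).div_const (2 - γ)).sub
          ((hpow (4 - γ)).div_const (2 * (4 - γ)))).const_mul p).add
        ((((Real.hasDerivAt_sin x).mul (hpow (2 - γ))).div_const 2).const_mul q)
    rw [heq x ⟨hx0, hx2π⟩]
    refine HasDerivAt.hasDerivWithinAt ?_
    refine hF.congr_deriv ?_
    rw [show (2:ℝ) - γ - 1 = 1 - γ by ring, show (4:ℝ) - γ - 1 = 3 - γ by ring]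
    field_simp
  have key := intervalIntegral.integral_eq_sub_of_hasDeriv_right_of_le (by linarith)
    hFc.continuousOn hder hD
  have hF0 : F γ p q 0 = 0 := by
    unfold F
    simp [Real.zero_rpow h2γ, Real.zero_rpow h4γ]
  have hF2π : F γ p q (2 * π) = 0 := by
    unfold F
    rw [show (2 * π) / 2 = π by ring]
    simp [Real.sin_pi, Real.zero_rpow h2γ, Real.zero_rpow h4γ]
  rw [key, hF0, hF2π, sub_zero]


lemma hden_eq (γ : ℝ) {η : ℝ} (hs : 0 < Real.sin (η / 2)) :
    (4 * Real.sin (η / 2) ^ 2) ^ (γ / 2) = (2 * Real.sin (η / 2)) ^ γ := by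
  have ht : (0:ℝ) < 2 * Real.sin (η / 2) := by linarith
  rw [show 4 * Real.sin (η / 2) ^ 2 = (2 * Real.sin (η / 2)) ^ (2:ℕ) by ring,
    ← Real.rpow_natCast (2 * Real.sin (η / 2)) 2, ← Real.rpow_mul ht.le]
  congr 1
  ring

lemma sin_eq (η : ℝ) : Real.sin η = 2 * Real.sin (η / 2) * Real.cos (η / 2) := by
  have h := Real.sin_two_mul (η / 2)
  rwa [show 2 * (η / 2) = η by ring] at h

lemma cos_eq (η : ℝ) : Real.cos η = 1 - 2 * Real.sin (η / 2) ^ 2 := by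
  have h := Real.cos_two_mul (η / 2)
  rw [show 2 * (η / 2) = η by ring] at h
  rw [h, Real.cos_sq']
  ring

end FirstModeAux

open FirstModeAux

/-- The linearization at ε = 0 of the contour-dynamics functional annihilates
the first Fourier modes `sin β` and `cos β` (the eigenvalue σ₁ vanishes):
for `γ ∈ (1,2)` and every `β ∈ ℝ`,
`(1−γ/2)·⨍ sin(β−η)·sin η/(4sin²(η/2))^{γ/2} dη
    = ⨍ (cos β − cos(β−η))·cos η/(4sin²(η/2))^{γ/2} dη` and
`(1−γ/2)·⨍ cos(β−η)·sin η/(4sin²(η/2))^{γ/2} dη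
    = −⨍ (sin β − sin(β−η))·cos η/(4sin²(η/2))^{γ/2} dη`. -/
theorem first_mode_annihilated (γ : ℝ) (h1 : 1 < γ) (h2 : γ < 2) :
    ∀ β : ℝ,
      ((1 - γ / 2) *
          ((1 / (2 * Real.pi)) *
            ∫ η in (0 : ℝ)..(2 * Real.pi),
              Real.sin (β - η) * Real.sin η /
                (4 * Real.sin (η / 2) ^ 2) ^ (γ / 2)) =
        (1 / (2 * Real.pi)) *
          ∫ η in (0 : ℝ)..(2 * Real.pi),
            (Real.cos β - Real.cos (β - η)) * Real.cos η /
              (4 * Real.sin (η / 2) ^ 2) ^ (γ / 2)) ∧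
      ((1 - γ / 2) *
          ((1 / (2 * Real.pi)) *
            ∫ η in (0 : ℝ)..(2 * Real.pi),
              Real.cos (β - η) * Real.sin η /
                (4 * Real.sin (η / 2) ^ 2) ^ (γ / 2)) =
        -((1 / (2 * Real.pi)) *
          ∫ η in (0 : ℝ)..(2 * Real.pi),
            (Real.sin β - Real.sin (β - η)) * Real.cos η /
              (4 * Real.sin (η / 2) ^ 2) ^ (γ / 2))) := by
  intro β
  have hπ := Real.pi_pos
  -- abbreviations for the four integrands
  set f1 : ℝ → ℝ := fun η => Real.sin (β - η) * Real.sin η /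
      (4 * Real.sin (η / 2) ^ 2) ^ (γ / 2) with hf1def
  set f2 : ℝ → ℝ := fun η => (Real.cos β - Real.cos (β - η)) * Real.cos η /
      (4 * Real.sin (η / 2) ^ 2) ^ (γ / 2) with hf2def
  set f3 : ℝ → ℝ := fun η => Real.cos (β - η) * Real.sin η /
      (4 * Real.sin (η / 2) ^ 2) ^ (γ / 2) with hf3def
  set f4 : ℝ → ℝ := fun η => (Real.sin β - Real.sin (β - η)) * Real.cos η /
      (4 * Real.sin (η / 2) ^ 2) ^ (γ / 2) with hf4def
  have hsnn : ∀ η ∈ Ioc (0:ℝ) (2 * π), 0 ≤ Real.sin (η / 2) := fun η hη =>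
    Real.sin_nonneg_of_nonneg_of_le_pi (by linarith [hη.1]) (by linarith [hη.2])
  have hb_sin : ∀ η ∈ Ioc (0:ℝ) (2 * π), |Real.sin η| ≤ 2 * Real.sin (η / 2) := by
    intro η hη
    rw [sin_eq η, abs_mul, abs_mul]
    have h1 := abs_nonneg (Real.sin (η / 2))
    have h2 := Real.abs_cos_le_one (η / 2)
    have h3 := hsnn η hη
    rw [abs_of_nonneg h3, show |(2:ℝ)| = 2 from by norm_num]
    nlinarith [mul_nonneg h3 (sub_nonneg.mpr h2)]
  -- integrability of the four integrands
  have hf1 : IntervalIntegrable f1 volume 0 (2 * π) := by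
    refine int_aux γ h1 h2 _ (by fun_prop) ?_
    intro η hη
    rw [abs_mul]
    calc |Real.sin (β - η)| * |Real.sin η| ≤ 1 * |Real.sin η| := by
          have := Real.abs_sin_le_one (β - η)
          have := abs_nonneg (Real.sin η)
          nlinarith
      _ ≤ 2 * Real.sin (η / 2) := by rw [one_mul]; exact hb_sin η hη
  have hf3 : IntervalIntegrable f3 volume 0 (2 * π) := by
    refine int_aux γ h1 h2 _ (by fun_prop) ?_
    intro η hη
    rw [abs_mul]
    calc |Real.cos (β - η)| * |Real.sin η| ≤ 1 * |Real.sin η| := by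
          have := Real.abs_cos_le_one (β - η)
          have := abs_nonneg (Real.sin η)
          nlinarith
      _ ≤ 2 * Real.sin (η / 2) := by rw [one_mul]; exact hb_sin η hη
  have hf2 : IntervalIntegrable f2 volume 0 (2 * π) := by
    refine int_aux γ h1 h2 _ (by fun_prop) ?_
    intro η hη
    rw [abs_mul]
    have hcc : Real.cos β - Real.cos (β - η) =
        -2 * Real.sin (β - η / 2) * Real.sin (η / 2) := by
      rw [Real.cos_sub_cos]
      congr 2 <;> ring
    rw [hcc]
    have h2 := Real.abs_sin_le_one (β - η / 2)
    have h3 := hsnn η hη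
    have h4 := Real.abs_cos_le_one η
    rw [abs_mul, abs_mul, abs_of_nonneg h3]
    have : |(-2 : ℝ)| = 2 := by norm_num
    rw [this]
    have hac : |Real.sin (β - η / 2)| * |Real.cos η| ≤ 1 :=
      mul_le_one₀ h2 (abs_nonneg _) h4
    nlinarith [mul_nonneg h3 (sub_nonneg.mpr hac)]
  have hf4 : IntervalIntegrable f4 volume 0 (2 * π) := by
    refine int_aux γ h1 h2 _ (by fun_prop) ?_
    intro η hη
    rw [abs_mul]
    have hss : Real.sin β - Real.sin (β - η) =
        2 * Real.sin (η / 2) * Real.cos (β - η / 2) := by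
      rw [Real.sin_sub_sin]
      congr 2 <;> ring
    rw [hss]
    have h2 := Real.abs_cos_le_one (β - η / 2)
    have h3 := hsnn η hη
    have h4 := Real.abs_cos_le_one η
    rw [abs_mul, abs_mul, abs_of_nonneg h3]
    have : |(2 : ℝ)| = 2 := by norm_num
    rw [this]
    have hac : |Real.cos (β - η / 2)| * |Real.cos η| ≤ 1 :=
      mul_le_one₀ h2 (abs_nonneg _) h4
    nlinarith [mul_nonneg h3 (sub_nonneg.mpr hac)]
  -- pointwise identities and FTC
  have hz1 : ∫ η in (0:ℝ)..(2 * π), ((1 - γ / 2) * f1 η - f2 η) = 0 := by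
    refine ftc γ h1 h2 ((2 - γ / 2) * Real.sin β) (-Real.cos β) _
      ((hf1.const_mul _).sub hf2) ?_
    intro η hη
    have hs : 0 < Real.sin (η / 2) :=
      Real.sin_pos_of_pos_of_lt_pi (by linarith [hη.1]) (by linarith [hη.2])
    have ht : (0:ℝ) < 2 * Real.sin (η / 2) := by linarith
    have hY : (2 * Real.sin (η / 2)) ^ γ ≠ 0 := (Real.rpow_pos_of_pos ht γ).ne'
    have e1 : (2 * Real.sin (η / 2)) ^ (1 - γ)
        = 2 * Real.sin (η / 2) / (2 * Real.sin (η / 2)) ^ γ := by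
      rw [Real.rpow_sub ht, Real.rpow_one]
    have e2 : (2 * Real.sin (η / 2)) ^ (2 - γ)
        = 4 * Real.sin (η / 2) ^ 2 / (2 * Real.sin (η / 2)) ^ γ := by
      rw [Real.rpow_sub ht]
      congr 1
      rw [show (2:ℝ) = ((2:ℕ):ℝ) by norm_num, Real.rpow_natCast]
      ring
    have e3 : (2 * Real.sin (η / 2)) ^ (3 - γ)
        = 8 * Real.sin (η / 2) ^ 3 / (2 * Real.sin (η / 2)) ^ γ := by
      rw [Real.rpow_sub ht]
      congr 1
      rw [show (3:ℝ) = ((3:ℕ):ℝ) by norm_num, Real.rpow_natCast]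
      ring
    simp only [hf1def, hf2def]
    rw [hden_eq γ hs, Real.sin_sub, Real.cos_sub, e1, e2, e3, sin_eq η, cos_eq η]
    field_simp
    ring
  have hz2 : ∫ η in (0:ℝ)..(2 * π), ((1 - γ / 2) * f3 η + f4 η) = 0 := by
    refine ftc γ h1 h2 ((2 - γ / 2) * Real.cos β) (Real.sin β) _
      ((hf3.const_mul _).add hf4) ?_
    intro η hη
    have hs : 0 < Real.sin (η / 2) :=
      Real.sin_pos_of_pos_of_lt_pi (by linarith [hη.1]) (by linarith [hη.2])
    have ht : (0:ℝ) < 2 * Real.sin (η / 2) := by linarith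
    have hY : (2 * Real.sin (η / 2)) ^ γ ≠ 0 := (Real.rpow_pos_of_pos ht γ).ne'
    have e1 : (2 * Real.sin (η / 2)) ^ (1 - γ)
        = 2 * Real.sin (η / 2) / (2 * Real.sin (η / 2)) ^ γ := by
      rw [Real.rpow_sub ht, Real.rpow_one]
    have e2 : (2 * Real.sin (η / 2)) ^ (2 - γ)
        = 4 * Real.sin (η / 2) ^ 2 / (2 * Real.sin (η / 2)) ^ γ := by
      rw [Real.rpow_sub ht]
      congr 1
      rw [show (2:ℝ) = ((2:ℕ):ℝ) by norm_num, Real.rpow_natCast]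
      ring
    have e3 : (2 * Real.sin (η / 2)) ^ (3 - γ)
        = 8 * Real.sin (η / 2) ^ 3 / (2 * Real.sin (η / 2)) ^ γ := by
      rw [Real.rpow_sub ht]
      congr 1
      rw [show (3:ℝ) = ((3:ℕ):ℝ) by norm_num, Real.rpow_natCast]
      ring
    simp only [hf3def, hf4def]
    rw [hden_eq γ hs, Real.sin_sub, Real.cos_sub, e1, e2, e3, sin_eq η, cos_eq η]
    field_simp
    ring
  rw [intervalIntegral.integral_sub (hf1.const_mul _) hf2,
    intervalIntegral.integral_const_mul] at hz1
  rw [intervalIntegral.integral_add (hf3.const_mul _) hf4,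
    intervalIntegral.integral_const_mul] at hz2
  constructor
  · linear_combination (1 / (2 * π)) * hz1
  · linear_combination (1 / (2 * π)) * hz2
end

section
/- Let γ ∈ (1,2) and for an integer j ≥ 2 let σ_j = 2^{γ−1} · (Γ(1−γ)/Γ(1−γ/2)²) · ( Γ(1+γ/2)/Γ(2−γ/2) − Γ(j+γ/2)/Γ(1+j−γ/2) ). Then σ_j > 0 for every integer j ≥ 2, and σ_j < σ_{j+1} for every integer j ≥ 2. -/
/-- Positivity and strict monotonicity of the eigenvalues
`σ_j = 2^{γ−1}·(Γ(1−γ)/Γ(1−γ/2)²)·(Γ(1+γ/2)/Γ(2−γ/2) − Γ(j+γ/2)/Γ(1+j−γ/2))`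
of the linearized contour-dynamics operator, for `γ ∈ (1,2)` and integers `j ≥ 2`. -/
theorem sigma_pos_and_strictMono (γ : ℝ) (h1 : 1 < γ) (h2 : γ < 2)
    (σ : ℕ → ℝ)
    (hσ : ∀ j : ℕ, 2 ≤ j →
      σ j = 2 ^ (γ - 1) * (Real.Gamma (1 - γ) / Real.Gamma (1 - γ / 2) ^ 2) *
        (Real.Gamma (1 + γ / 2) / Real.Gamma (2 - γ / 2) -
          Real.Gamma (j + γ / 2) / Real.Gamma (1 + j - γ / 2))) :
    (∀ j : ℕ, 2 ≤ j → 0 < σ j) ∧ (∀ j : ℕ, 2 ≤ j → σ j < σ (j + 1)) := by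
  set g : ℕ → ℝ := fun j => Real.Gamma ((j : ℝ) + γ / 2) / Real.Gamma (1 + (j : ℝ) - γ / 2)
    with hg
  have hγ2 : 0 < γ / 2 := by linarith
  have hγ2' : γ / 2 < 1 := by linarith
  -- positivity of g
  have hgpos : ∀ j : ℕ, 0 < g j := by
    intro j
    have h1' : (0:ℝ) < (j : ℝ) + γ / 2 := by positivity
    have h2' : (0:ℝ) < 1 + (j : ℝ) - γ / 2 := by
      have : (0:ℝ) ≤ (j : ℝ) := Nat.cast_nonneg j
      linarith
    exact div_pos (Real.Gamma_pos_of_pos h1') (Real.Gamma_pos_of_pos h2')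
  -- strict monotonicity of g
  have hgstep : ∀ j : ℕ, g j < g (j + 1) := by
    intro j
    have hjn : (0:ℝ) ≤ (j : ℝ) := Nat.cast_nonneg j
    have hx : (0:ℝ) < (j : ℝ) + γ / 2 := by positivity
    have hy : (0:ℝ) < 1 + (j : ℝ) - γ / 2 := by linarith
    have hnum : Real.Gamma (((j:ℕ)+1 : ℕ) + γ / 2) = ((j:ℝ) + γ/2) * Real.Gamma ((j:ℝ) + γ/2) := by
      have := Real.Gamma_add_one (ne_of_gt hx)
      push_cast
      rw [show (j:ℝ) + 1 + γ/2 = ((j:ℝ) + γ/2) + 1 by ring]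
      exact this
    have hden : Real.Gamma (1 + ((j:ℕ)+1 : ℕ) - γ / 2)
        = (1 + (j:ℝ) - γ/2) * Real.Gamma (1 + (j:ℝ) - γ/2) := by
      have := Real.Gamma_add_one (ne_of_gt hy)
      push_cast
      rw [show 1 + ((j:ℝ) + 1) - γ/2 = (1 + (j:ℝ) - γ/2) + 1 by ring]
      exact this
    have hGx : 0 < Real.Gamma ((j:ℝ) + γ/2) := Real.Gamma_pos_of_pos hx
    have hGy : 0 < Real.Gamma (1 + (j:ℝ) - γ/2) := Real.Gamma_pos_of_pos hy
    have hfac : 1 + (j:ℝ) - γ/2 < (j:ℝ) + γ/2 := by linarith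
    have : g (j+1) = (((j:ℝ) + γ/2) / (1 + (j:ℝ) - γ/2)) * g j := by
      simp only [hg, hnum, hden]
      field_simp
    rw [this]
    have hfac1 : 1 < ((j:ℝ) + γ/2) / (1 + (j:ℝ) - γ/2) :=
      (one_lt_div hy).mpr hfac
    nlinarith [hgpos j]
  have hgmono : StrictMono g := strictMono_nat_of_lt_succ hgstep
  -- prefactor negative
  have hC : 2 ^ (γ - 1) * (Real.Gamma (1 - γ) / Real.Gamma (1 - γ / 2) ^ 2) < 0 := by
    have hpow : (0:ℝ) < 2 ^ (γ - 1) := Real.rpow_pos_of_pos (by norm_num) _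
    have hG2 : 0 < Real.Gamma (1 - γ / 2) := Real.Gamma_pos_of_pos (by linarith)
    have hG1 : Real.Gamma (1 - γ) < 0 := by
      have hne : (1 - γ) ≠ 0 := by intro h; linarith [sub_eq_zero.mp h]
      have hrec := Real.Gamma_add_one hne
      have hpos : 0 < Real.Gamma (1 - γ + 1) := Real.Gamma_pos_of_pos (by linarith)
      nlinarith
    have : Real.Gamma (1 - γ) / Real.Gamma (1 - γ / 2) ^ 2 < 0 :=
      div_neg_of_neg_of_pos hG1 (by positivity)
    exact mul_neg_of_pos_of_neg hpow this
  -- rewrite σ in terms of g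
  have hσ' : ∀ j : ℕ, 2 ≤ j →
      σ j = 2 ^ (γ - 1) * (Real.Gamma (1 - γ) / Real.Gamma (1 - γ / 2) ^ 2) * (g 1 - g j) := by
    intro j hj
    rw [hσ j hj]
    congr 2
    simp only [hg]
    norm_num
  constructor
  · intro j hj
    rw [hσ' j hj]
    have hgj : g 1 < g j := hgmono (by omega)
    nlinarith
  · intro j hj
    rw [hσ' j hj, hσ' (j+1) (by omega)]
    have hgj : g j < g (j+1) := hgstep j
    nlinarith
end

section
/- Let γ ∈ (1,2) and for an integer j ≥ 2 let σ_j = 2^{γ−1} · (Γ(1−γ)/Γ(1−γ/2)²) · ( Γ(1+γ/2)/Γ(2−γ/2) − Γ(j+γ/2)/Γ(1+j−γ/2) ). Then there exist constants 0 < c ≤ C such that c·j^{γ−1} ≤ σ_j ≤ C·j^{γ−1} for every integer j ≥ 2. -/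
set_option maxHeartbeats 1000000

lemma gamma_combo {x y t : ℝ} (hx : 0 < x) (hy : 0 < y) (ht0 : 0 ≤ t) (ht1 : t ≤ 1) :
    Real.Gamma (t*x + (1-t)*y) ≤ Real.Gamma x ^ t * Real.Gamma y ^ (1-t) := by
  have h := Real.convexOn_log_Gamma.2 (Set.mem_Ioi.2 hx) (Set.mem_Ioi.2 hy) ht0
    (by linarith : (0:ℝ) ≤ 1 - t) (by ring)
  simp only [Function.comp_apply, smul_eq_mul] at h
  have hz : 0 < t*x + (1-t)*y := by
    rcases eq_or_lt_of_le ht0 with h0 | h0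
    · rw [← h0]; nlinarith
    · nlinarith [mul_nonneg (sub_nonneg.2 ht1) hy.le, mul_pos h0 hx]
  have e1 : Real.Gamma (t*x+(1-t)*y) = Real.exp (Real.log (Real.Gamma (t*x+(1-t)*y))) :=
    (Real.exp_log (Real.Gamma_pos_of_pos hz)).symm
  rw [e1, Real.rpow_def_of_pos (Real.Gamma_pos_of_pos hx),
    Real.rpow_def_of_pos (Real.Gamma_pos_of_pos hy), ← Real.exp_add]
  exact Real.exp_le_exp.2 (by linarith [h])

lemma gautschi_low {x s : ℝ} (hx : 0 < x) (hs0 : 0 < s) (hs1 : s < 1) :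
    x ^ (1-s) * Real.Gamma (x+s) ≤ Real.Gamma (x+1) := by
  have h := gamma_combo (t := 1-s) hx (by linarith : (0:ℝ) < x+1) (by linarith) (by linarith)
  have e : (1-s)*x + (1-(1-s))*(x+1) = x + s := by ring
  rw [e] at h
  have hgx1 : 0 < Real.Gamma (x+1) := Real.Gamma_pos_of_pos (by linarith)
  have hgx : Real.Gamma x = Real.Gamma (x+1) / x := by
    rw [Real.Gamma_add_one hx.ne']; field_simp
  rw [hgx, Real.div_rpow hgx1.le hx.le] at h
  have hxp : 0 < x ^ (1-s) := Real.rpow_pos_of_pos hx _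
  have key : Real.Gamma (x+1) ^ (1-s) * Real.Gamma (x+1) ^ (1-(1-s)) = Real.Gamma (x+1) := by
    rw [← Real.rpow_add hgx1]; norm_num
  calc x ^ (1-s) * Real.Gamma (x+s)
      ≤ x ^ (1-s) * (Real.Gamma (x+1) ^ (1-s) / x ^ (1-s) * Real.Gamma (x+1) ^ (1-(1-s))) := by
        apply mul_le_mul_of_nonneg_left h (Real.rpow_nonneg hx.le _)
    _ = Real.Gamma (x+1) ^ (1-s) * Real.Gamma (x+1) ^ (1-(1-s)) := by
        field_simp
    _ = Real.Gamma (x+1) := key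

lemma gautschi_high {x s : ℝ} (hx : 0 < x) (hs0 : 0 < s) (hs1 : s < 1) :
    Real.Gamma (x+1) ≤ (x+s) ^ (1-s) * Real.Gamma (x+s) := by
  have hxs : (0:ℝ) < x + s := by linarith
  have h := gamma_combo (t := s) hxs (by linarith : (0:ℝ) < x+s+1) hs0.le hs1.le
  have e : s*(x+s) + (1-s)*(x+s+1) = x + 1 := by ring
  rw [e] at h
  have hgxs : 0 < Real.Gamma (x+s) := Real.Gamma_pos_of_pos hxs
  have e2 : Real.Gamma (x+s+1) = (x+s) * Real.Gamma (x+s) := Real.Gamma_add_one hxs.ne'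
  rw [e2, Real.mul_rpow hxs.le hgxs.le] at h
  calc Real.Gamma (x+1) ≤ Real.Gamma (x+s) ^ s * ((x+s) ^ (1-s) * Real.Gamma (x+s) ^ (1-s)) := h
    _ = (x+s) ^ (1-s) * (Real.Gamma (x+s) ^ s * Real.Gamma (x+s) ^ (1-s)) := by ring
    _ = (x+s) ^ (1-s) * Real.Gamma (x+s) := by
        rw [← Real.rpow_add hgxs]; norm_num

/-- Two-sided bound `σ_j ≍ j^{γ−1}` for the eigenvalues
`σ_j = 2^{γ−1}·(Γ(1−γ)/Γ(1−γ/2)²)·(Γ(1+γ/2)/Γ(2−γ/2) − Γ(j+γ/2)/Γ(1+j−γ/2))`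
of the linearized contour-dynamics operator, for `γ ∈ (1,2)`. -/
theorem sigma_growth (γ : ℝ) (h1 : 1 < γ) (h2 : γ < 2)
    (σ : ℕ → ℝ)
    (hσ : ∀ j : ℕ, 2 ≤ j →
      σ j = 2 ^ (γ - 1) * (Real.Gamma (1 - γ) / Real.Gamma (1 - γ / 2) ^ 2) *
        (Real.Gamma (1 + γ / 2) / Real.Gamma (2 - γ / 2) -
          Real.Gamma (j + γ / 2) / Real.Gamma (1 + j - γ / 2))) :
    ∃ c C : ℝ, 0 < c ∧ c ≤ C ∧
      ∀ j : ℕ, 2 ≤ j →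
        c * (j : ℝ) ^ (γ - 1) ≤ σ j ∧ σ j ≤ C * (j : ℝ) ^ (γ - 1) := by
  have hexp : 0 < γ - 1 := by linarith
  set a : ℝ := γ/2 with ha
  clear_value a
  have ha1 : 1/2 < a := by rw [ha]; linarith
  have ha2 : a < 1 := by rw [ha]; linarith
  have hp2 : (0:ℝ) < 2 ^ (γ-1) := Real.rpow_pos_of_pos two_pos _
  have hp2one : (1:ℝ) ≤ 2 ^ (γ-1) := Real.one_le_rpow one_le_two hexp.le
  -- sign of the prefactor
  have hΓneg : Real.Gamma (1-γ) < 0 := by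
    have hne : (1:ℝ) - γ ≠ 0 := by intro h; rw [sub_eq_zero] at h; linarith
    have hrec := Real.Gamma_add_one hne
    have hpos : 0 < Real.Gamma ((1-γ)+1) := Real.Gamma_pos_of_pos (by linarith)
    nlinarith [hrec, hpos]
  have hΓsq : 0 < Real.Gamma (1 - a) ^ 2 :=
    pow_pos (Real.Gamma_pos_of_pos (by linarith)) 2
  have hA : 2 ^ (γ-1) * (Real.Gamma (1-γ) / Real.Gamma (1-a) ^ 2) < 0 :=
    mul_neg_of_pos_of_neg hp2 (div_neg_of_neg_of_pos hΓneg hΓsq)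
  set K : ℝ := -(2 ^ (γ-1) * (Real.Gamma (1-γ) / Real.Gamma (1-a) ^ 2)) with hKdef
  clear_value K
  have hK : 0 < K := by rw [hKdef]; exact neg_pos.2 hA
  set R : ℕ → ℝ := fun j => Real.Gamma (↑j + a) / Real.Gamma (1 + ↑j - a) with hRdef
  clear_value R
  set B : ℝ := Real.Gamma (1 + a) / Real.Gamma (2 - a) with hBdef
  clear_value B
  have hBpos : 0 < B := by
    rw [hBdef]
    exact div_pos (Real.Gamma_pos_of_pos (by linarith)) (Real.Gamma_pos_of_pos (by linarith))
  -- Gautschi bounds for R j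
  have hGa : ∀ j : ℕ, 2 ≤ j →
      ((j:ℝ)+a-1) ^ (γ-1) ≤ R j ∧ R j ≤ (1+(j:ℝ)-a) ^ (γ-1) := by
    intro j hj
    have hjR : (2:ℝ) ≤ (j:ℝ) := by exact_mod_cast hj
    have hx : (0:ℝ) < (j:ℝ)+a-1 := by linarith
    have hs0 : (0:ℝ) < 2-2*a := by linarith
    have hs1 : 2-2*a < 1 := by linarith
    have hgs : 0 < Real.Gamma (1 + ↑j - a) := Real.Gamma_pos_of_pos (by linarith)
    have e1 : ((j:ℝ)+a-1) + 1 = (j:ℝ) + a := by ring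
    have e2 : ((j:ℝ)+a-1) + (2-2*a) = 1 + (j:ℝ) - a := by ring
    have e3 : 1 - (2-2*a) = γ - 1 := by rw [ha]; ring
    constructor
    · have h := gautschi_low hx hs0 hs1
      rw [e1, e2, e3] at h
      simp only [hRdef]
      rw [le_div_iff₀ hgs]
      exact h
    · have h := gautschi_high hx hs0 hs1
      rw [e1, e2, e3] at h
      simp only [hRdef]
      rw [div_le_iff₀ hgs]
      exact h
  have hRpos : ∀ j : ℕ, 0 < R j := by
    intro j
    have hj0 : (0:ℝ) ≤ (j:ℝ) := Nat.cast_nonneg j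
    simp only [hRdef]
    exact div_pos (Real.Gamma_pos_of_pos (by linarith)) (Real.Gamma_pos_of_pos (by linarith))
  -- monotonicity
  have hmono : ∀ j : ℕ, 2 ≤ j → R 2 ≤ R j := by
    intro j hj
    induction j, hj using Nat.le_induction with
    | base => exact le_rfl
    | succ n hn ih =>
      have hnR : (2:ℝ) ≤ (n:ℝ) := by exact_mod_cast hn
      have hna : (0:ℝ) < (n:ℝ) + a := by linarith
      have hnb : (0:ℝ) < 1 + (n:ℝ) - a := by linarith
      have step : R n ≤ R (n+1) := by
        have eR : R (n+1) = (((n:ℝ)+a)/(1+(n:ℝ)-a)) * R n := by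
          simp only [hRdef]
          push_cast
          rw [show ((n:ℝ)+1) + a = ((n:ℝ)+a) + 1 by ring,
            show 1 + ((n:ℝ)+1) - a = (1+(n:ℝ)-a) + 1 by ring,
            Real.Gamma_add_one hna.ne', Real.Gamma_add_one hnb.ne']
          exact mul_div_mul_comm _ _ _ _
        rw [eR]
        have hratio : 1 ≤ ((n:ℝ)+a)/(1+(n:ℝ)-a) := by
          rw [le_div_iff₀ hnb]; linarith
        nlinarith [hRpos n, hratio]
      linarith
  -- B in terms of R 2
  have hBR2 : B = ((2-a)/(1+a)) * R 2 := by
    have h1a : (0:ℝ) < 1 + a := by linarith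
    have h2a : (0:ℝ) < 2 - a := by linarith
    have hg2 : 0 < Real.Gamma (2-a) := Real.Gamma_pos_of_pos h2a
    simp only [hRdef, hBdef]
    push_cast
    rw [show (2:ℝ) + a = (1+a) + 1 by ring, show 1 + (2:ℝ) - a = (2-a) + 1 by ring,
      Real.Gamma_add_one h1a.ne', Real.Gamma_add_one h2a.ne']
    rw [mul_div_mul_comm]
    field_simp
  set u : ℝ := (2*a-1)/(1+a) with hu
  clear_value u
  have hupos : 0 < u := by rw [hu]; exact div_pos (by linarith) (by linarith)
  have hule : u ≤ 1 := by rw [hu, div_le_one (by linarith)]; linarith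
  refine ⟨K * u / 2 ^ (γ-1), K * 2 ^ (γ-1), by positivity, ?_, ?_⟩
  · have h1' : K * u / 2 ^ (γ-1) ≤ K * u := div_le_self (by positivity) hp2one
    have h2' : K * u ≤ K := by nlinarith
    have h3' : K ≤ K * 2 ^ (γ-1) := le_mul_of_one_le_right hK.le hp2one
    linarith
  intro j hj
  have hjR : (2:ℝ) ≤ (j:ℝ) := by exact_mod_cast hj
  obtain ⟨hlow, hhigh⟩ := hGa j hj
  have hσK : σ j = K * (R j - B) := by
    rw [hσ j hj, hKdef, hBdef]
    simp only [hRdef]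
    ring
  have hBle : B ≤ ((2-a)/(1+a)) * R j := by
    rw [hBR2]
    have h1a : (0:ℝ) < (2-a)/(1+a) := div_pos (by linarith) (by linarith)
    nlinarith [hmono j hj]
  have huRj : u * R j ≤ R j - B := by
    have e : R j - ((2-a)/(1+a)) * R j = u * R j := by
      rw [hu]; field_simp; ring
    linarith [hBle, e.ge, e.le]
  have hjpow : 0 ≤ (j:ℝ) ^ (γ-1) := Real.rpow_nonneg (by linarith) _
  constructor
  · have hhalf : (j:ℝ)/2 ≤ (j:ℝ)+a-1 := by linarith
    have hq : ((j:ℝ)/2) ^ (γ-1) ≤ ((j:ℝ)+a-1) ^ (γ-1) :=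
      Real.rpow_le_rpow (by linarith) hhalf hexp.le
    have hdiv : ((j:ℝ)/2) ^ (γ-1) = (j:ℝ) ^ (γ-1) / 2 ^ (γ-1) :=
      Real.div_rpow (by linarith : (0:ℝ) ≤ (j:ℝ)) (by norm_num : (0:ℝ) ≤ 2) (γ-1)
    have hchain : (j:ℝ) ^ (γ-1) / 2 ^ (γ-1) ≤ R j := by
      rw [← hdiv]; linarith
    rw [hσK]
    calc K * u / 2 ^ (γ-1) * (j:ℝ) ^ (γ-1)
        = K * u * ((j:ℝ) ^ (γ-1) / 2 ^ (γ-1)) := by ring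
      _ ≤ K * u * R j := mul_le_mul_of_nonneg_left hchain (by positivity)
      _ = K * (u * R j) := by ring
      _ ≤ K * (R j - B) := mul_le_mul_of_nonneg_left huRj hK.le
  · have h2j : 1+(j:ℝ)-a ≤ 2*(j:ℝ) := by linarith
    have hq : (1+(j:ℝ)-a) ^ (γ-1) ≤ (2*(j:ℝ)) ^ (γ-1) :=
      Real.rpow_le_rpow (by linarith) h2j hexp.le
    have hmulr : (2*(j:ℝ)) ^ (γ-1) = 2 ^ (γ-1) * (j:ℝ) ^ (γ-1) :=
      Real.mul_rpow (by norm_num) (by linarith)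
    rw [hσK]
    calc K * (R j - B) ≤ K * R j := by nlinarith
      _ ≤ K * (2 ^ (γ-1) * (j:ℝ) ^ (γ-1)) := by
          apply mul_le_mul_of_nonneg_left _ hK.le
          rw [← hmulr]; linarith
      _ = K * 2 ^ (γ-1) * (j:ℝ) ^ (γ-1) := by ring
end

section
/- Let γ ∈ (1,2), M > 0, and let g : ℝ → ℝ be twice continuously differentiable and 2π-periodic with |g(β)| ≤ M, |g'(β)| ≤ M and |g''(β)| ≤ M for all β. For ε > 0, x ∈ ℝ², set R(β) = 1 + ε^{1+γ}·g(β) and z(β) = (z₁(β), z₂(β)) = x + ε·R(β)·(cos β, sin β). Then for every β: z₁'(β)·z₂''(β) − z₂'(β)·z₁''(β) = ε²·( R(β)² + 2·ε^{2+2γ}·g'(β)² − ε^{1+γ}·g''(β)·R(β) ), and there exists ε₀ > 0, depending only on γ and M, such that for every ε ∈ (0, ε₀) this quantity is strictly positive for all β; consequently the curve z has strictly positive signed curvature (z₁'z₂'' − z₂'z₁'')/((z₁')² + (z₂')²)^{3/2} for all β. -/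
open Real

/-- First coordinate of the patch boundary parameterization
`z(β) = x + ε(1 + ε^{1+γ} g(β))(cos β, sin β)`. -/
noncomputable def patchZ1 (γ ε : ℝ) (g : ℝ → ℝ) (x : ℝ × ℝ) (β : ℝ) : ℝ :=
  x.1 + ε * (1 + ε ^ (1 + γ) * g β) * Real.cos β

/-- Second coordinate of the patch boundary parameterization
`z(β) = x + ε(1 + ε^{1+γ} g(β))(cos β, sin β)`. -/
noncomputable def patchZ2 (γ ε : ℝ) (g : ℝ → ℝ) (x : ℝ × ℝ) (β : ℝ) : ℝ :=
  x.2 + ε * (1 + ε ^ (1 + γ) * g β) * Real.sin β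

/-- Numerator `z₁'·z₂'' − z₂'·z₁''` of the signed curvature of the curve `z`. -/
noncomputable def curvNum (γ ε : ℝ) (g : ℝ → ℝ) (x : ℝ × ℝ) (β : ℝ) : ℝ :=
  deriv (patchZ1 γ ε g x) β * deriv (deriv (patchZ2 γ ε g x)) β -
    deriv (patchZ2 γ ε g x) β * deriv (deriv (patchZ1 γ ε g x)) β

lemma derivg_diff (g : ℝ → ℝ) (hg : ContDiff ℝ 2 g) : Differentiable ℝ (deriv g) := by
  have h : ContDiff ℝ ((1:ℕ)+1) g := by exact_mod_cast hg
  exact ((contDiff_succ_iff_deriv.mp h).2.2).differentiable (by norm_num)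

lemma z1_hasDeriv (γ ε : ℝ) (g : ℝ → ℝ) (hg : ContDiff ℝ 2 g) (x : ℝ × ℝ) (β : ℝ) :
    HasDerivAt (fun β => x.1 + ε * (1 + ε ^ (1+γ) * g β) * Real.cos β)
      (ε * (ε ^ (1+γ) * deriv g β * Real.cos β - (1 + ε ^ (1+γ) * g β) * Real.sin β)) β := by
  have hgd : HasDerivAt g (deriv g β) β := ((hg.differentiable (by norm_num)) β).hasDerivAt
  have h := ((hasDerivAt_const β (1:ℝ)).add (hgd.const_mul (ε ^ (1+γ)))).const_mul ε
  have h2 := (h.mul (Real.hasDerivAt_cos β)).const_add x.1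
  refine h2.congr_deriv ?_
  simp only [Pi.add_apply]; ring

lemma z2_hasDeriv (γ ε : ℝ) (g : ℝ → ℝ) (hg : ContDiff ℝ 2 g) (x : ℝ × ℝ) (β : ℝ) :
    HasDerivAt (fun β => x.2 + ε * (1 + ε ^ (1+γ) * g β) * Real.sin β)
      (ε * (ε ^ (1+γ) * deriv g β * Real.sin β + (1 + ε ^ (1+γ) * g β) * Real.cos β)) β := by
  have hgd : HasDerivAt g (deriv g β) β := ((hg.differentiable (by norm_num)) β).hasDerivAt
  have h := ((hasDerivAt_const β (1:ℝ)).add (hgd.const_mul (ε ^ (1+γ)))).const_mul ε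
  have h2 := (h.mul (Real.hasDerivAt_sin β)).const_add x.2
  refine h2.congr_deriv ?_
  simp only [Pi.add_apply]; ring

lemma deriv_z1 (γ ε : ℝ) (g : ℝ → ℝ) (hg : ContDiff ℝ 2 g) (x : ℝ × ℝ) :
    deriv (patchZ1 γ ε g x) = fun β =>
      ε * (ε ^ (1+γ) * deriv g β * Real.cos β - (1 + ε ^ (1+γ) * g β) * Real.sin β) := by
  funext β; exact (z1_hasDeriv γ ε g hg x β).deriv

lemma deriv_z2 (γ ε : ℝ) (g : ℝ → ℝ) (hg : ContDiff ℝ 2 g) (x : ℝ × ℝ) :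
    deriv (patchZ2 γ ε g x) = fun β =>
      ε * (ε ^ (1+γ) * deriv g β * Real.sin β + (1 + ε ^ (1+γ) * g β) * Real.cos β) := by
  funext β; exact (z2_hasDeriv γ ε g hg x β).deriv

lemma deriv2_z1 (γ ε : ℝ) (g : ℝ → ℝ) (hg : ContDiff ℝ 2 g) (x : ℝ × ℝ) (β : ℝ) :
    deriv (deriv (patchZ1 γ ε g x)) β =
      ε * (ε ^ (1+γ) * deriv (deriv g) β * Real.cos β
        - 2 * ε ^ (1+γ) * deriv g β * Real.sin β
        - (1 + ε ^ (1+γ) * g β) * Real.cos β) := by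
  rw [deriv_z1 γ ε g hg x]
  have hgd : HasDerivAt g (deriv g β) β := ((hg.differentiable (by norm_num)) β).hasDerivAt
  have hgd2 : HasDerivAt (deriv g) (deriv (deriv g) β) β := ((derivg_diff g hg) β).hasDerivAt
  have h := (((hgd2.const_mul (ε ^ (1+γ))).mul (Real.hasDerivAt_cos β)).sub
    (((hasDerivAt_const β (1:ℝ)).add (hgd.const_mul (ε ^ (1+γ)))).mul
      (Real.hasDerivAt_sin β))).const_mul ε
  convert h.deriv using 1
  · congr 1
  · simp only [Pi.add_apply]; ring

lemma deriv2_z2 (γ ε : ℝ) (g : ℝ → ℝ) (hg : ContDiff ℝ 2 g) (x : ℝ × ℝ) (β : ℝ) :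
    deriv (deriv (patchZ2 γ ε g x)) β =
      ε * (ε ^ (1+γ) * deriv (deriv g) β * Real.sin β
        + 2 * ε ^ (1+γ) * deriv g β * Real.cos β
        - (1 + ε ^ (1+γ) * g β) * Real.sin β) := by
  rw [deriv_z2 γ ε g hg x]
  have hgd : HasDerivAt g (deriv g β) β := ((hg.differentiable (by norm_num)) β).hasDerivAt
  have hgd2 : HasDerivAt (deriv g) (deriv (deriv g) β) β := ((derivg_diff g hg) β).hasDerivAt
  have h := (((hgd2.const_mul (ε ^ (1+γ))).mul (Real.hasDerivAt_sin β)).add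
    (((hasDerivAt_const β (1:ℝ)).add (hgd.const_mul (ε ^ (1+γ)))).mul
      (Real.hasDerivAt_cos β))).const_mul ε
  convert h.deriv using 1
  · congr 1
  · simp only [Pi.add_apply]; ring

lemma curvNum_eq (γ ε : ℝ) (g : ℝ → ℝ) (hg : ContDiff ℝ 2 g) (x : ℝ × ℝ) (β : ℝ) :
    curvNum γ ε g x β = ε ^ 2 * ((1 + ε ^ (1+γ) * g β) ^ 2 +
      2 * (ε ^ (1+γ)) ^ 2 * deriv g β ^ 2 -
      ε ^ (1+γ) * deriv (deriv g) β * (1 + ε ^ (1+γ) * g β)) := by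
  unfold curvNum
  rw [deriv2_z1 γ ε g hg x β, deriv2_z2 γ ε g hg x β, deriv_z1 γ ε g hg x,
    deriv_z2 γ ε g hg x]
  have pyth := Real.sin_sq_add_cos_sq β
  simp only
  linear_combination (ε ^ 2 * ((1 + ε ^ (1+γ) * g β) ^ 2 +
      2 * (ε ^ (1+γ)) ^ 2 * deriv g β ^ 2 -
      ε ^ (1+γ) * deriv (deriv g) β * (1 + ε ^ (1+γ) * g β))) * pyth

lemma speed_eq (γ ε : ℝ) (g : ℝ → ℝ) (hg : ContDiff ℝ 2 g) (x : ℝ × ℝ) (β : ℝ) :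
    deriv (patchZ1 γ ε g x) β ^ 2 + deriv (patchZ2 γ ε g x) β ^ 2 =
      ε ^ 2 * ((ε ^ (1+γ)) ^ 2 * deriv g β ^ 2 + (1 + ε ^ (1+γ) * g β) ^ 2) := by
  rw [deriv_z1 γ ε g hg x, deriv_z2 γ ε g hg x]
  have pyth := Real.sin_sq_add_cos_sq β
  simp only
  linear_combination (ε ^ 2 * ((ε ^ (1+γ)) ^ 2 * deriv g β ^ 2 +
      (1 + ε ^ (1+γ) * g β) ^ 2)) * pyth

lemma rpow_two_eq (ε γ : ℝ) (hε : 0 < ε) : ε ^ (2 + 2*γ) = (ε ^ (1+γ)) ^ 2 := by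
  rw [← Real.rpow_natCast (ε ^ (1+γ)) 2, ← Real.rpow_mul hε.le]
  congr 1
  push_cast
  ring

/-- Convexity of the vortex patches: for a `C²`, `2π`-periodic perturbation `g`
bounded (with its first two derivatives) by `M`, the curvature numerator of the
patch boundary `z(β) = x + ε(1 + ε^{1+γ} g(β))(cos β, sin β)` equals
`ε²(R² + 2ε^{2+2γ}(g')² − ε^{1+γ} g'' R)` with `R = 1 + ε^{1+γ} g`, and there
is `ε₀ > 0` depending only on `γ` and `M` such that for all `ε ∈ (0, ε₀)` this
quantity, and hence the signed curvature, is strictly positive. -/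
theorem patch_convexity (γ M : ℝ) (h1 : 1 < γ) (h2 : γ < 2) (hM : 0 < M) :
    (∀ g : ℝ → ℝ, ContDiff ℝ 2 g → (∀ β : ℝ, g (β + 2 * Real.pi) = g β) →
      (∀ β : ℝ, |g β| ≤ M) → (∀ β : ℝ, |deriv g β| ≤ M) →
      (∀ β : ℝ, |deriv (deriv g) β| ≤ M) →
      ∀ ε : ℝ, 0 < ε → ∀ x : ℝ × ℝ, ∀ β : ℝ,
        curvNum γ ε g x β =
          ε ^ 2 * ((1 + ε ^ (1 + γ) * g β) ^ 2 +
            2 * ε ^ (2 + 2 * γ) * deriv g β ^ 2 -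
            ε ^ (1 + γ) * deriv (deriv g) β * (1 + ε ^ (1 + γ) * g β))) ∧
    ∃ ε₀ > (0 : ℝ), ∀ g : ℝ → ℝ, ContDiff ℝ 2 g →
      (∀ β : ℝ, g (β + 2 * Real.pi) = g β) →
      (∀ β : ℝ, |g β| ≤ M) → (∀ β : ℝ, |deriv g β| ≤ M) →
      (∀ β : ℝ, |deriv (deriv g) β| ≤ M) →
      ∀ ε : ℝ, ε ∈ Set.Ioo 0 ε₀ → ∀ x : ℝ × ℝ, ∀ β : ℝ,
        0 < curvNum γ ε g x β ∧
        0 < curvNum γ ε g x β /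
            ((deriv (patchZ1 γ ε g x) β ^ 2 +
              deriv (patchZ2 γ ε g x) β ^ 2) ^ ((3 : ℝ) / 2)) := by
  have h1γ : (0:ℝ) < 1 + γ := by linarith
  constructor
  · intro g hg _ _ _ _ ε hε x β
    rw [curvNum_eq γ ε g hg x β, rpow_two_eq ε γ hε]
  · set c : ℝ := 1 / (6 * M + 1) with hc
    have hc0 : 0 < c := by positivity
    refine ⟨min 1 (c ^ (1 / (1 + γ))), lt_min one_pos (Real.rpow_pos_of_pos hc0 _), ?_⟩
    intro g hg _ hgM hgM' hgM'' ε hε x β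
    obtain ⟨hε0, hεlt⟩ := hε
    set a : ℝ := ε ^ (1 + γ) with ha
    have ha0 : 0 < a := Real.rpow_pos_of_pos hε0 _
    have hac : a < c := by
      have h3 : ε < c ^ (1 / (1 + γ)) := lt_of_lt_of_le hεlt (min_le_right _ _)
      have h4 : a < (c ^ (1 / (1 + γ))) ^ (1 + γ) :=
        Real.rpow_lt_rpow hε0.le h3 h1γ
      rwa [← Real.rpow_mul hc0.le, one_div_mul_cancel (ne_of_gt h1γ),
        Real.rpow_one] at h4
    have haM : a * M < 1 / 6 := by
      have : a * (6 * M + 1) < 1 := by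
        rw [hc] at hac
        calc a * (6 * M + 1) < c * (6 * M + 1) := by
              apply mul_lt_mul_of_pos_right hac; positivity
          _ = 1 := by rw [hc]; field_simp
      nlinarith
    have hb := abs_le.mp (hgM β)
    have hb2 := abs_le.mp (hgM'' β)
    have hag1 : -(a * M) ≤ a * g β := by nlinarith
    have hag2 : a * g β ≤ a * M := by nlinarith
    have hag2'' : a * deriv (deriv g) β ≤ a * M := by nlinarith
    have hag1'' : -(a * M) ≤ a * deriv (deriv g) β := by nlinarith
    have hRlb : 5 / 6 < 1 + a * g β := by nlinarith
    have hRub : 1 + a * g β < 7 / 6 := by nlinarith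
    have hQ : 0 < (1 + a * g β) ^ 2 + 2 * a ^ 2 * deriv g β ^ 2 -
        a * deriv (deriv g) β * (1 + a * g β) := by
      have h5 : 0 ≤ (a * M - a * deriv (deriv g) β) * (1 + a * g β) :=
        mul_nonneg (by linarith) (by linarith)
      have hmul : a * M * (1 + a * g β) < 1 / 6 * (7 / 6) :=
        mul_lt_mul'' haM hRub (by positivity) (by linarith)
      nlinarith [sq_nonneg (deriv g β), h5, hmul, sq_nonneg (1 + a * g β - 5 / 6)]
    have hcn : 0 < curvNum γ ε g x β := by
      rw [curvNum_eq γ ε g hg x β]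
      rw [← ha]
      exact mul_pos (pow_pos hε0 2) hQ
    refine ⟨hcn, ?_⟩
    apply div_pos hcn
    apply Real.rpow_pos_of_pos
    rw [speed_eq γ ε g hg x β, ← ha]
    have : 0 < a ^ 2 * deriv g β ^ 2 + (1 + a * g β) ^ 2 := by
      nlinarith [sq_nonneg (a * deriv g β), sq_nonneg (1 + a * g β - 5 / 6)]
    exact mul_pos (pow_pos hε0 2) this
end
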